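/- arXiv:1911.02072 — 5 statements merged into one kernel-verified Lean document; each statement's English description precedes it below -/
import Mathlib

section
/- Let (x_n) be a wide-(s) sequence in a real Banach space X and let K be the closed convex hull of the set {x_n : n ∈ ℕ}. Then K = { ∑_{n=1}^∞ t_n x_n : t_n ≥ 0 for all n and ∑_{n=1}^∞ t_n = 1 }, where each such series converges in norm. -/
open Filter Topology

noncomputable section

variable {E : Type*} [NormedAddCommGroup E] [NormedSpace ℝ E]

/-- A subset of a normed space is weakly compact if its image under the identity
map into the weak space is compact in the weak topology. -/
def IsWeaklyCompact (C : Set E) : Prop :=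
  IsCompact (toWeakSpace ℝ E '' C)

/-- `z` is the weak limit of the sequence `x`. -/
def WeakLim (x : ℕ → E) (z : E) : Prop :=
  ∀ f : StrongDual ℝ E, Tendsto (fun n => f (x n)) atTop (𝓝 (f z))

/-- The sequence `x` is weakly Cauchy: `(f (x n))` converges for every functional `f`. -/
def WeakCauchySeq (x : ℕ → E) : Prop :=
  ∀ f : StrongDual ℝ E, ∃ l : ℝ, Tendsto (fun n => f (x n)) atTop (𝓝 l)

/-- `f` is affine on the convex set `K`. -/
def AffineOn (K : Set E) (f : E → E) : Prop :=
  ∀ x ∈ K, ∀ y ∈ K, ∀ t : ℝ, 0 ≤ t → t ≤ 1 →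
    f (t • x + (1 - t) • y) = t • f x + (1 - t) • f y

/-- `f` is `L`-bi-Lipschitz on `K`. -/
def IsBiLipschitzOn (L : ℝ) (K : Set E) (f : E → E) : Prop :=
  ∃ c₁ c₂ : ℝ, 0 < c₁ ∧ 0 < c₂ ∧ c₂ / c₁ ≤ L ∧
    ∀ x ∈ K, ∀ y ∈ K,
      c₁ * ‖x - y‖ ≤ ‖f x - f y‖ ∧ ‖f x - f y‖ ≤ c₂ * ‖x - y‖

/-- `f` is uniformly bi-Lipschitz on `K` (all iterates are bi-Lipschitz with the
same constants). -/
def UnifBiLipschitzOn (K : Set E) (f : E → E) : Prop :=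
  ∃ c₁ c₂ : ℝ, 0 < c₁ ∧ 0 < c₂ ∧
    ∀ p : ℕ, ∀ x ∈ K, ∀ y ∈ K,
      c₁ * ‖x - y‖ ≤ ‖f^[p] x - f^[p] y‖ ∧ ‖f^[p] x - f^[p] y‖ ≤ c₂ * ‖x - y‖

/-- `f` is uniformly Lipschitz on `K`. -/
def UnifLipschitzOn (K : Set E) (f : E → E) : Prop :=
  ∃ L : ℝ, 0 < L ∧ ∀ p : ℕ, ∀ x ∈ K, ∀ y ∈ K,
    ‖f^[p] x - f^[p] y‖ ≤ L * ‖x - y‖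

/-- `θ(f) = inf { liminf_n ‖x - fⁿ(y)‖ : x, y ∈ K }`. -/
def fpTheta (K : Set E) (f : E → E) : ℝ :=
  sInf {r : ℝ | ∃ x ∈ K, ∃ y ∈ K, r = Filter.liminf (fun n => ‖x - f^[n] y‖) atTop}

/-- `x` is a basic sequence with basis constant `𝒦`. -/
def IsBasicSeq (x : ℕ → E) (𝒦 : ℝ) : Prop :=
  (∀ n, x n ≠ 0) ∧ 1 ≤ 𝒦 ∧
    ∀ m n : ℕ, m ≤ n → ∀ a : ℕ → ℝ,
      ‖∑ i ∈ Finset.range m, a i • x i‖ ≤ 𝒦 * ‖∑ i ∈ Finset.range n, a i • x i‖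

/-- `x` is seminormalized. -/
def Seminormalized (x : ℕ → E) : Prop :=
  ∃ a b : ℝ, 0 < a ∧ ∀ n, a ≤ ‖x n‖ ∧ ‖x n‖ ≤ b

/-- `x` dominates the summing basis of `c₀` with constant `c`. -/
def DominatesSummingBasis (x : ℕ → E) (c : ℝ) : Prop :=
  ∀ m : ℕ, ∀ a : ℕ → ℝ, ∀ k ≤ m,
    c * |∑ i ∈ Finset.Icc k m, a i| ≤ ‖∑ i ∈ Finset.range (m + 1), a i • x i‖

/-- `x` is a wide-(s) sequence. -/
def IsWideS (x : ℕ → E) : Prop :=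
  Seminormalized x ∧ (∃ 𝒦, IsBasicSeq x 𝒦) ∧ ∃ c > 0, DominatesSummingBasis x c

/-- `x` is equivalent to the summing basis of `c₀`. -/
def EquivSummingBasis (x : ℕ → E) : Prop :=
  ∃ L : ℝ, 1 ≤ L ∧ ∀ m : ℕ, ∀ a : ℕ → ℝ,
    (∀ k ≤ m, (1 / L) * |∑ i ∈ Finset.Icc k m, a i| ≤
      ‖∑ i ∈ Finset.range (m + 1), a i • x i‖) ∧
    ‖∑ i ∈ Finset.range (m + 1), a i • x i‖ ≤
      L * (Finset.range (m + 1)).sup' Finset.nonempty_range_add_one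
        (fun k => |∑ i ∈ Finset.Icc k m, a i|)

/-- `x` is an `ℓ₁`-sequence. -/
def IsL1Seq (x : ℕ → E) : Prop :=
  ∃ c C : ℝ, 0 < c ∧ 0 < C ∧ ∀ m : ℕ, ∀ a : ℕ → ℝ,
    c * ∑ i ∈ Finset.range m, |a i| ≤ ‖∑ i ∈ Finset.range m, a i • x i‖ ∧
    ‖∑ i ∈ Finset.range m, a i • x i‖ ≤ C * ∑ i ∈ Finset.range m, |a i|

/-- `w` is a convex block sequence of `x`. -/
def IsConvexBlockSeq (w x : ℕ → E) : Prop :=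
  ∃ (F : ℕ → Finset ℕ) (lam : ℕ → ℝ),
    (∀ j, (F j).Nonempty) ∧
    (∀ j, ∀ i ∈ F j, ∀ i' ∈ F (j + 1), i < i') ∧
    (∀ i, 0 ≤ lam i) ∧
    (∀ j, ∑ i ∈ F j, lam i = 1) ∧
    (∀ j, w j = ∑ i ∈ F j, lam i • x i)

/-- Sequences `u` and `v` are `L`-equivalent. -/
def SeqEquiv (L : ℝ) (u v : ℕ → E) : Prop :=
  ∀ m : ℕ, ∀ a : ℕ → ℝ,
    (1 / L) * ‖∑ i ∈ Finset.range m, a i • u i‖ ≤ ‖∑ i ∈ Finset.range m, a i • v i‖ ∧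
    ‖∑ i ∈ Finset.range m, a i • v i‖ ≤ L * ‖∑ i ∈ Finset.range m, a i • u i‖

/-- `w` is uniformly `L`-shift equivalent: each shifted sequence `(w (n + p))ₙ`
is `L`-equivalent to `w`. -/
def UnifShiftEquiv (L : ℝ) (w : ℕ → E) : Prop :=
  ∀ p : ℕ, SeqEquiv L (fun n => w (n + p)) w

/-- A basic sequence is convex block shiftable if some subsequence has all of its
convex block sequences uniformly `L`-shift equivalent, for a single `L`. -/
def ConvexBlockShiftable (x : ℕ → E) : Prop :=
  (∃ 𝒦, IsBasicSeq x 𝒦) ∧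
  ∃ L : ℝ, 0 < L ∧ ∃ φ : ℕ → ℕ, StrictMono φ ∧
    ∀ w : ℕ → E, IsConvexBlockSeq w (x ∘ φ) → UnifShiftEquiv L w

/-- Pełczyński's property (u). -/
def PropertyU (E : Type*) [NormedAddCommGroup E] [NormedSpace ℝ E] : Prop :=
  ∀ x : ℕ → E, WeakCauchySeq x →
    ∃ y : ℕ → E,
      (∀ f : StrongDual ℝ E, Summable fun n => |f (y n)|) ∧
      WeakLim (fun n => x n - ∑ i ∈ Finset.range (n + 1), y i) 0

/-- Property (su). -/
def PropertySU (E : Type*) [NormedAddCommGroup E] [NormedSpace ℝ E] : Prop :=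
  ∀ x : ℕ → E, WeakCauchySeq x → ¬(∃ z, WeakLim x z) →
    ∃ w : ℕ → E, ConvexBlockShiftable w ∧ WeakLim (fun n => x n - w n) 0


/-- Extend a finite sum of an eventually-zero function to a larger range. -/
private lemma sum_extend' {X : Type*} [AddCommMonoid X] (g : ℕ → X) {N M : ℕ} (h : N ≤ M)
    (hg : ∀ n, N ≤ n → g n = 0) :
    ∑ n ∈ Finset.range M, g n = ∑ n ∈ Finset.range N, g n := by
  rw [← Finset.sum_subset (Finset.range_subset_range.2 h)]
  intro n _ hn'
  exact hg n (Nat.le_of_not_lt (by simpa using hn'))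

/-- If `x` is a wide-(s) sequence, then the closed convex hull of its
range is exactly the set of norm-convergent sums `∑ tₙ xₙ` with `tₙ ≥ 0` and
`∑ tₙ = 1`. -/
theorem closedConvexHull_eq_series_of_wideS
    {X : Type*} [NormedAddCommGroup X] [NormedSpace ℝ X] [CompleteSpace X]
    (x : ℕ → X) (hx : IsWideS x) :
    closure (convexHull ℝ (Set.range x)) =
      {y : X | ∃ t : ℕ → ℝ, (∀ n, 0 ≤ t n) ∧
        Tendsto (fun m => ∑ n ∈ Finset.range m, t n) atTop (𝓝 (1 : ℝ)) ∧
        Tendsto (fun m => ∑ n ∈ Finset.range m, t n • x n) atTop (𝓝 y)} := by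
  obtain ⟨-, ⟨𝒦, -, hK1, hKb⟩, c, hc, hdom⟩ := hx
  -- the set of finite convex combinations of the `x n`
  set D : Set X := {y | ∃ N : ℕ, ∃ t : ℕ → ℝ, (∀ n, 0 ≤ t n) ∧ (∀ n, N ≤ n → t n = 0) ∧
    (∑ n ∈ Finset.range N, t n) = 1 ∧ y = ∑ n ∈ Finset.range N, t n • x n} with hDdef
  have hrange : Set.range x ⊆ D := by
    rintro _ ⟨k, rfl⟩
    refine ⟨k + 1, fun n => if n = k then 1 else 0, ?_, ?_, ?_, ?_⟩
    · intro n; dsimp only; split <;> norm_num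
    · intro n hn; dsimp only; rw [if_neg (by omega)]
    · simp
    · simp [ite_smul]
  have hconvD : Convex ℝ D := by
    rintro y ⟨N, t, ht0, htz, hts, rfl⟩ y' ⟨N', t', ht0', htz', hts', rfl⟩ s s' hs hs' hss
    refine ⟨max N N', fun n => s * t n + s' * t' n, ?_, ?_, ?_, ?_⟩
    · intro n; exact add_nonneg (mul_nonneg hs (ht0 n)) (mul_nonneg hs' (ht0' n))
    · intro n hn
      dsimp only
      rw [htz n (le_trans (le_max_left _ _) hn), htz' n (le_trans (le_max_right _ _) hn)]
      ring
    · rw [Finset.sum_add_distrib, ← Finset.mul_sum, ← Finset.mul_sum,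
        sum_extend' t (le_max_left N N') htz, sum_extend' t' (le_max_right N N') htz',
        hts, hts']
      linarith
    · rw [← sum_extend' (fun n => t n • x n) (le_max_left N N')
          (fun n hn => by rw [htz n hn, zero_smul]),
        ← sum_extend' (fun n => t' n • x n) (le_max_right N N')
          (fun n hn => by rw [htz' n hn, zero_smul]),
        Finset.smul_sum, Finset.smul_sum, ← Finset.sum_add_distrib]
      exact (Finset.sum_congr rfl (fun n _ => by
        rw [add_smul, smul_smul, smul_smul])).symm
  -- the hard inclusion: limits of finite convex combinations are convex series
  have hDS : ∀ y : X, y ∈ closure D →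
      ∃ t : ℕ → ℝ, (∀ n, 0 ≤ t n) ∧
        Tendsto (fun m => ∑ n ∈ Finset.range m, t n) atTop (𝓝 (1 : ℝ)) ∧
        Tendsto (fun m => ∑ n ∈ Finset.range m, t n • x n) atTop (𝓝 y) := by
    intro y hy
    obtain ⟨v, hvD, hvy⟩ := mem_closure_iff_seq_limit.1 hy
    choose N tj htj0 htjz htjs htjv using hvD
    -- extending the defining sums of `v j` to any large range
    have hvsum : ∀ j M, N j ≤ M → ∑ n ∈ Finset.range M, tj j n • x n = v j := by
      intro j M hM
      rw [sum_extend' (fun n => tj j n • x n) hM (fun n hn => by rw [htjz j n hn, zero_smul]),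
        ← htjv j]
    have hssum : ∀ j M, N j ≤ M → ∑ n ∈ Finset.range M, tj j n = 1 := by
      intro j M hM
      rw [sum_extend' (tj j) hM (htjz j), htjs j]
    -- key estimate A, from the basic sequence property
    have hA : ∀ j j' m, ‖∑ n ∈ Finset.range m, (tj j n - tj j' n) • x n‖ ≤ 𝒦 * ‖v j - v j'‖ := by
      intro j j' m
      set M := max m (max (N j) (N j')) with hM
      have hfull : ∑ n ∈ Finset.range M, (tj j n - tj j' n) • x n = v j - v j' := by
        simp only [sub_smul, Finset.sum_sub_distrib]
        rw [hvsum j M (le_trans (le_max_left _ _) (le_max_right _ _)),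
          hvsum j' M (le_trans (le_max_right _ _) (le_max_right _ _))]
      have := hKb m M (le_max_left _ _) (fun n => tj j n - tj j' n)
      rwa [hfull] at this
    -- key estimate B, from domination of the summing basis
    have hB : ∀ j j' k, c * |∑ n ∈ Finset.range k, tj j n - ∑ n ∈ Finset.range k, tj j' n|
        ≤ ‖v j - v j'‖ := by
      intro j j' k
      set a : ℕ → ℝ := fun n => tj j n - tj j' n with ha
      set M := max k (max (N j) (N j')) with hM
      have hkM : k ≤ M := le_max_left _ _
      have hNjM : N j ≤ M + 1 := le_trans (le_trans (le_max_left _ _) (le_max_right _ _)) (Nat.le_succ M)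
      have hNj'M : N j' ≤ M + 1 := le_trans (le_trans (le_max_right _ _) (le_max_right _ _)) (Nat.le_succ M)
      have hsum0 : ∑ n ∈ Finset.range (M + 1), a n = 0 := by
        simp only [ha, Finset.sum_sub_distrib]
        rw [hssum j _ hNjM, hssum j' _ hNj'M, sub_self]
      have hIcc : ∑ n ∈ Finset.Icc k M, a n
          = -(∑ n ∈ Finset.range k, tj j n - ∑ n ∈ Finset.range k, tj j' n) := by
        have h1 := Finset.sum_Ico_consecutive a (Nat.zero_le k) (le_trans hkM (Nat.le_succ M))
        rw [Nat.succ_eq_add_one, show Finset.Ico k (M + 1) = Finset.Icc k M by rw [Finset.Ico_add_one_right_eq_Icc]] at h1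
        have h2 : ∑ n ∈ Finset.Ico 0 k, a n = ∑ n ∈ Finset.range k, a n := by
          rw [Finset.range_eq_Ico]
        have h3 : ∑ n ∈ Finset.Ico 0 (M + 1), a n = 0 := by
          rw [Finset.range_eq_Ico] at hsum0; exact hsum0
        have : ∑ n ∈ Finset.range k, a n + ∑ n ∈ Finset.Icc k M, a n = 0 := by
          rw [← h2, h1, h3]
        have h4 : ∑ n ∈ Finset.range k, a n
            = ∑ n ∈ Finset.range k, tj j n - ∑ n ∈ Finset.range k, tj j' n := by
          simp [ha, Finset.sum_sub_distrib]
        linarith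
      have hfull : ∑ n ∈ Finset.range (M + 1), a n • x n = v j - v j' := by
        simp only [ha, sub_smul, Finset.sum_sub_distrib]
        rw [hvsum j _ hNjM, hvsum j' _ hNj'M]
      have := hdom M a k hkM
      rwa [hfull, hIcc, abs_neg] at this
    have hvC : CauchySeq v := hvy.cauchySeq
    -- the limit coefficients
    have hcoef : ∀ n : ℕ, ∃ l : ℝ, Tendsto (fun j => tj j n) atTop (𝓝 l) := by
      intro n
      refine cauchySeq_tendsto_of_complete ?_
      rw [Metric.cauchySeq_iff]
      intro ε hε
      obtain ⟨J, hJ⟩ := Metric.cauchySeq_iff.1 hvC (c * ε / 2) (by positivity)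
      refine ⟨J, fun j hj j' hj' => ?_⟩
      have h1 := hB j j' (n + 1)
      have h2 := hB j j' n
      have hd := hJ j hj j' hj'
      rw [dist_eq_norm] at hd
      have hsucc : tj j n - tj j' n
          = (∑ i ∈ Finset.range (n + 1), tj j i - ∑ i ∈ Finset.range (n + 1), tj j' i)
            - (∑ i ∈ Finset.range n, tj j i - ∑ i ∈ Finset.range n, tj j' i) := by
        rw [Finset.sum_range_succ, Finset.sum_range_succ]; ring
      rw [Real.dist_eq, hsucc]
      have e1 : |∑ i ∈ Finset.range (n + 1), tj j i - ∑ i ∈ Finset.range (n + 1), tj j' i|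
          < ε / 2 := by
        nlinarith [abs_nonneg (∑ i ∈ Finset.range (n + 1), tj j i - ∑ i ∈ Finset.range (n + 1), tj j' i)]
      have e2 : |∑ i ∈ Finset.range n, tj j i - ∑ i ∈ Finset.range n, tj j' i| < ε / 2 := by
        nlinarith [abs_nonneg (∑ i ∈ Finset.range n, tj j i - ∑ i ∈ Finset.range n, tj j' i)]
      calc |(∑ i ∈ Finset.range (n + 1), tj j i - ∑ i ∈ Finset.range (n + 1), tj j' i)
            - (∑ i ∈ Finset.range n, tj j i - ∑ i ∈ Finset.range n, tj j' i)|
          ≤ |∑ i ∈ Finset.range (n + 1), tj j i - ∑ i ∈ Finset.range (n + 1), tj j' i|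
            + |∑ i ∈ Finset.range n, tj j i - ∑ i ∈ Finset.range n, tj j' i| := abs_sub _ _
        _ < ε := by linarith
    choose t ht using hcoef
    have ht0 : ∀ n, 0 ≤ t n :=
      fun n => ge_of_tendsto (ht n) (Eventually.of_forall fun j => htj0 j n)
    have hnorm0 : Tendsto (fun j => ‖v j - y‖) atTop (𝓝 0) :=
      tendsto_iff_norm_sub_tendsto_zero.1 hvy
    -- limits of the key estimates as j' → ∞
    have hBlim : ∀ j k, c * |∑ n ∈ Finset.range k, tj j n - ∑ n ∈ Finset.range k, t n|
        ≤ ‖v j - y‖ := by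
      intro j k
      have h1 : Tendsto (fun j' => c * |∑ n ∈ Finset.range k, tj j n - ∑ n ∈ Finset.range k, tj j' n|)
          atTop (𝓝 (c * |∑ n ∈ Finset.range k, tj j n - ∑ n ∈ Finset.range k, t n|)) := by
        exact ((tendsto_const_nhds.sub (tendsto_finset_sum _ (fun n _ => ht n))).abs).const_mul c
      have h2 : Tendsto (fun j' => ‖v j - v j'‖) atTop (𝓝 ‖v j - y‖) :=
        (tendsto_const_nhds.sub hvy).norm
      exact le_of_tendsto_of_tendsto' h1 h2 (fun j' => hB j j' k)
    have hAlim : ∀ j m, ‖∑ n ∈ Finset.range m, (tj j n - t n) • x n‖ ≤ 𝒦 * ‖v j - y‖ := by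
      intro j m
      have h1 : Tendsto (fun j' => ‖∑ n ∈ Finset.range m, (tj j n - tj j' n) • x n‖)
          atTop (𝓝 ‖∑ n ∈ Finset.range m, (tj j n - t n) • x n‖) := by
        exact (tendsto_finset_sum _ (fun n _ =>
          (tendsto_const_nhds.sub (ht n)).smul_const (x n))).norm
      have h2 : Tendsto (fun j' => 𝒦 * ‖v j - v j'‖) atTop (𝓝 (𝒦 * ‖v j - y‖)) :=
        ((tendsto_const_nhds.sub hvy).norm).const_mul 𝒦
      exact le_of_tendsto_of_tendsto' h1 h2 (fun j' => hA j j' m)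
    -- the partial sums of t tend to 1
    have hts1 : Tendsto (fun m => ∑ n ∈ Finset.range m, t n) atTop (𝓝 (1 : ℝ)) := by
      rw [Metric.tendsto_atTop]
      intro ε hε
      obtain ⟨j, hj⟩ : ∃ j, ‖v j - y‖ < c * ε / 2 :=
        (hnorm0.eventually (gt_mem_nhds (by positivity))).exists
      refine ⟨N j, fun k hk => ?_⟩
      have h1 := hBlim j k
      rw [hssum j k hk] at h1
      rw [Real.dist_eq, abs_sub_comm]
      nlinarith [abs_nonneg (1 - ∑ n ∈ Finset.range k, t n)]
    -- partial sums of the series are close to v j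
    set z : ℕ → X := fun m => ∑ n ∈ Finset.range m, t n • x n with hzdef
    have hAlim2 : ∀ j m, N j ≤ m → ‖v j - z m‖ ≤ 𝒦 * ‖v j - y‖ := by
      intro j m hm
      have h := hAlim j m
      have he : ∑ n ∈ Finset.range m, (tj j n - t n) • x n
          = v j - ∑ n ∈ Finset.range m, t n • x n := by
        simp only [sub_smul, Finset.sum_sub_distrib]
        rw [hvsum j m hm]
      show ‖v j - ∑ n ∈ Finset.range m, t n • x n‖ ≤ 𝒦 * ‖v j - y‖
      rwa [he] at h
    -- the series converges
    have hzC : CauchySeq z := by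
      rw [Metric.cauchySeq_iff']
      intro ε hε
      have hKpos : (0 : ℝ) < 𝒦 := lt_of_lt_of_le one_pos hK1
      obtain ⟨j, hj⟩ : ∃ j, ‖v j - y‖ < ε / (4 * 𝒦) :=
        (hnorm0.eventually (gt_mem_nhds (by positivity))).exists
      refine ⟨N j, fun m hm => ?_⟩
      have h1 := hAlim2 j m hm
      have h2 := hAlim2 j (N j) le_rfl
      have hd : dist (z m) (z (N j)) ≤ ‖v j - z m‖ + ‖v j - z (N j)‖ := by
        rw [dist_eq_norm]
        calc ‖z m - z (N j)‖ = ‖-(v j - z m) + (v j - z (N j))‖ := by congr 1; abel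
          _ ≤ ‖-(v j - z m)‖ + ‖v j - z (N j)‖ := norm_add_le _ _
          _ = ‖v j - z m‖ + ‖v j - z (N j)‖ := by rw [norm_neg]
      have h3 : 𝒦 * ‖v j - y‖ < ε / 4 := by
        have := mul_lt_mul_of_pos_left hj hKpos
        calc 𝒦 * ‖v j - y‖ < 𝒦 * (ε / (4 * 𝒦)) := this
          _ = ε / 4 := by field_simp
      linarith
    obtain ⟨w, hw⟩ := cauchySeq_tendsto_of_complete hzC
    -- the limit of the series equals y
    have hwy : ∀ j, ‖v j - w‖ ≤ 𝒦 * ‖v j - y‖ := by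
      intro j
      have h1 : Tendsto (fun m => ‖v j - z m‖) atTop (𝓝 ‖v j - w‖) :=
        (tendsto_const_nhds.sub hw).norm
      exact le_of_tendsto h1 ((eventually_ge_atTop (N j)).mono fun m hm => hAlim2 j m hm)
    have hyw : y = w := by
      have h0 : Tendsto (fun j => (1 + 𝒦) * ‖v j - y‖) atTop (𝓝 0) := by
        simpa using hnorm0.const_mul (1 + 𝒦)
      have hb : ∀ j, ‖y - w‖ ≤ (1 + 𝒦) * ‖v j - y‖ := by
        intro j
        calc ‖y - w‖ = ‖(y - v j) + (v j - w)‖ := by congr 1; abel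
          _ ≤ ‖y - v j‖ + ‖v j - w‖ := norm_add_le _ _
          _ = ‖v j - y‖ + ‖v j - w‖ := by rw [norm_sub_rev]
          _ ≤ ‖v j - y‖ + 𝒦 * ‖v j - y‖ := by linarith [hwy j]
          _ = (1 + 𝒦) * ‖v j - y‖ := by ring
      have : ‖y - w‖ ≤ 0 :=
        le_of_tendsto_of_tendsto' (tendsto_const_nhds : Tendsto (fun _ : ℕ => ‖y - w‖) atTop _)
          h0 hb
      have : y - w = 0 := norm_le_zero_iff.1 this
      exact sub_eq_zero.1 this
    refine ⟨t, ht0, hts1, ?_⟩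
    rw [hzdef] at hw
    rw [hyw]
    exact hw
  -- the easy inclusion: convex series belong to the closed convex hull
  have hS_sub : ∀ y : X, ∀ t : ℕ → ℝ, (∀ n, 0 ≤ t n) →
      Tendsto (fun m => ∑ n ∈ Finset.range m, t n) atTop (𝓝 (1 : ℝ)) →
      Tendsto (fun m => ∑ n ∈ Finset.range m, t n • x n) atTop (𝓝 y) →
      y ∈ closure (convexHull ℝ (Set.range x)) := by
    intro y t ht0 hts htx
    refine mem_closure_of_tendsto (b := atTop) (f := fun m : ℕ =>
      (∑ n ∈ Finset.range m, t n)⁻¹ • ∑ n ∈ Finset.range m, t n • x n) ?_ ?_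
    · have h1 : Tendsto (fun m => (∑ n ∈ Finset.range m, t n)⁻¹) atTop (𝓝 (1 : ℝ)⁻¹) :=
        hts.inv₀ one_ne_zero
      simpa using h1.smul htx
    · filter_upwards [hts.eventually (lt_mem_nhds (by norm_num : (1 : ℝ) / 2 < 1))] with m hm
      have hspos : 0 < ∑ n ∈ Finset.range m, t n := lt_trans (by norm_num) hm
      rw [Finset.smul_sum]
      have : ∀ n ∈ Finset.range m,
          (∑ i ∈ Finset.range m, t i)⁻¹ • (t n • x n)
            = ((∑ i ∈ Finset.range m, t i)⁻¹ * t n) • x n := fun n _ => by rw [smul_smul]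
      rw [Finset.sum_congr rfl this]
      refine (convex_convexHull ℝ _).sum_mem (fun n _ => ?_) ?_
        (fun n _ => subset_convexHull ℝ _ ⟨n, rfl⟩)
      · exact mul_nonneg (inv_nonneg.2 hspos.le) (ht0 n)
      · rw [← Finset.mul_sum, inv_mul_cancel₀ hspos.ne']
  -- putting it together
  apply Set.Subset.antisymm
  · intro y hy
    exact hDS y (closure_mono (convexHull_min hrange hconvD) hy)
  · rintro y ⟨t, ht0, hts, htx⟩
    exact hS_sub y t ht0 hts htx

end
end

section
/- Let (x_n) be a basic sequence in a real Banach space X with basis constant 𝒦 and suppose 0 < a ≤ ‖x_n‖ ≤ b for all n. Let θ ∈ (0,1) and let (α_n) be positive reals with (4b𝒦/a) ∑_{n=1}^∞ α_n ≤ θ. Define z_n = (1 − α_n) x_n + α_n x_{n+1}. Then (z_n) is a basic sequence and (1 − θ)‖∑_{n} t_n x_n‖ ≤ ‖∑_{n} t_n z_n‖ ≤ (1 + θ)‖∑_{n} t_n x_n‖ whenever the series ∑_n t_n x_n converges in norm. -/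
open Filter Topology

noncomputable section

variable {E : Type*} [NormedAddCommGroup E] [NormedSpace ℝ E]

private lemma coeffBound {X : Type*} [NormedAddCommGroup X] [NormedSpace ℝ X]
    (x : ℕ → X) (𝒦 a : ℝ) (hbasic : IsBasicSeq x 𝒦)
    (hnorm : ∀ n, a ≤ ‖x n‖) (c : ℕ → ℝ) {i n : ℕ} (hin : i < n) :
    |c i| * a ≤ 2 * 𝒦 * ‖∑ j ∈ Finset.range n, c j • x j‖ := by
  obtain ⟨_, hK1, hK⟩ := hbasic
  have h1 := hK (i + 1) n hin c
  have h2 := hK i n (Nat.le_of_lt hin) c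
  have heq : c i • x i =
      ∑ j ∈ Finset.range (i + 1), c j • x j - ∑ j ∈ Finset.range i, c j • x j := by
    rw [Finset.sum_range_succ]; abel
  have key : ‖c i • x i‖ ≤ 2 * 𝒦 * ‖∑ j ∈ Finset.range n, c j • x j‖ := by
    rw [heq]
    calc ‖∑ j ∈ Finset.range (i + 1), c j • x j - ∑ j ∈ Finset.range i, c j • x j‖
        ≤ ‖∑ j ∈ Finset.range (i + 1), c j • x j‖ + ‖∑ j ∈ Finset.range i, c j • x j‖ :=
          norm_sub_le _ _
      _ ≤ 2 * 𝒦 * ‖∑ j ∈ Finset.range n, c j • x j‖ := by linarith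
  have hax : |c i| * a ≤ |c i| * ‖x i‖ :=
    mul_le_mul_of_nonneg_left (hnorm i) (abs_nonneg _)
  rw [norm_smul, Real.norm_eq_abs] at key
  linarith

private lemma pertBound {X : Type*} [NormedAddCommGroup X] [NormedSpace ℝ X]
    (x z : ℕ → X) (𝒦 a b θ : ℝ) (α : ℕ → ℝ)
    (hbasic : IsBasicSeq x 𝒦) (ha : 0 < a)
    (hnorm : ∀ n, a ≤ ‖x n‖ ∧ ‖x n‖ ≤ b)
    (hα : ∀ n, 0 < α n) (hsum : Summable α)
    (hbound : 4 * b * 𝒦 / a * ∑' n, α n ≤ θ)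
    (hz : ∀ n, z n = (1 - α n) • x n + α n • x (n + 1))
    (c : ℕ → ℝ) (m n : ℕ) (hmn : m ≤ n) :
    ‖∑ i ∈ Finset.range m, c i • z i - ∑ i ∈ Finset.range m, c i • x i‖ ≤
      θ * ‖∑ j ∈ Finset.range n, c j • x j‖ := by
  have hK1 : (1:ℝ) ≤ 𝒦 := hbasic.2.1
  have hb : 0 < b := lt_of_lt_of_le ha ((hnorm 0).1.trans (hnorm 0).2)
  set N := ‖∑ j ∈ Finset.range n, c j • x j‖ with hN
  have hN0 : 0 ≤ N := norm_nonneg _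
  have hzx : ∀ i, ‖z i - x i‖ ≤ 2 * b * α i := by
    intro i
    have : z i - x i = α i • (x (i + 1) - x i) := by rw [hz i]; module
    rw [this, norm_smul, Real.norm_eq_abs, abs_of_pos (hα i)]
    have h1 := norm_sub_le (x (i + 1)) (x i)
    have h2 := (hnorm (i + 1)).2
    have h3 := (hnorm i).2
    nlinarith [(hα i).le]
  have hterm : ∀ i ∈ Finset.range m,
      ‖c i • z i - c i • x i‖ ≤ 4 * b * 𝒦 / a * α i * N := by
    intro i hi
    have hin : i < n := lt_of_lt_of_le (Finset.mem_range.mp hi) hmn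
    have hc : |c i| * a ≤ 2 * 𝒦 * N := coeffBound x 𝒦 a hbasic (fun k => (hnorm k).1) c hin
    have hci : |c i| ≤ 2 * 𝒦 * N / a := by
      rw [le_div_iff₀ ha]; linarith
    have : ‖c i • z i - c i • x i‖ = |c i| * ‖z i - x i‖ := by
      rw [← smul_sub, norm_smul, Real.norm_eq_abs]
    rw [this]
    have h1 : |c i| * ‖z i - x i‖ ≤ (2 * 𝒦 * N / a) * (2 * b * α i) := by
      apply mul_le_mul hci (hzx i) (norm_nonneg _)
      positivity
    calc |c i| * ‖z i - x i‖ ≤ (2 * 𝒦 * N / a) * (2 * b * α i) := h1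
      _ = 4 * b * 𝒦 / a * α i * N := by ring
  calc ‖∑ i ∈ Finset.range m, c i • z i - ∑ i ∈ Finset.range m, c i • x i‖
      = ‖∑ i ∈ Finset.range m, (c i • z i - c i • x i)‖ := by
        rw [Finset.sum_sub_distrib]
    _ ≤ ∑ i ∈ Finset.range m, ‖c i • z i - c i • x i‖ := norm_sum_le _ _
    _ ≤ ∑ i ∈ Finset.range m, 4 * b * 𝒦 / a * α i * N := Finset.sum_le_sum hterm
    _ = 4 * b * 𝒦 / a * (∑ i ∈ Finset.range m, α i) * N := by
        rw [Finset.mul_sum, Finset.sum_mul]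
    _ ≤ θ * N := by
        have hsle : ∑ i ∈ Finset.range m, α i ≤ ∑' i, α i :=
          Summable.sum_le_tsum _ (fun i _ => (hα i).le) hsum
        have hC : 0 ≤ 4 * b * 𝒦 / a := by positivity
        have : 4 * b * 𝒦 / a * (∑ i ∈ Finset.range m, α i) ≤ θ :=
          le_trans (mul_le_mul_of_nonneg_left hsle hC) hbound
        exact mul_le_mul_of_nonneg_right this hN0


/-- small perturbation of a basic sequence by convex combinations:
`zₙ = (1 - αₙ) xₙ + αₙ x_{n+1}` is a basic sequence and is `(1 ± θ)`-equivalent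
to `x` on convergent series, provided `(4b𝒦/a) ∑ αₙ ≤ θ`. -/
theorem perturbed_basicSeq_equiv
    {X : Type*} [NormedAddCommGroup X] [NormedSpace ℝ X] [CompleteSpace X]
    (x : ℕ → X) (𝒦 a b θ : ℝ) (α : ℕ → ℝ)
    (hbasic : IsBasicSeq x 𝒦) (ha : 0 < a)
    (hnorm : ∀ n, a ≤ ‖x n‖ ∧ ‖x n‖ ≤ b)
    (hθ₀ : 0 < θ) (hθ₁ : θ < 1)
    (hα : ∀ n, 0 < α n) (hsum : Summable α)
    (hbound : 4 * b * 𝒦 / a * ∑' n, α n ≤ θ)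
    (z : ℕ → X) (hz : ∀ n, z n = (1 - α n) • x n + α n • x (n + 1)) :
    (∃ 𝒦' : ℝ, IsBasicSeq z 𝒦') ∧
      ∀ (t : ℕ → ℝ) (s : X),
        Tendsto (fun m => ∑ n ∈ Finset.range m, t n • x n) atTop (𝓝 s) →
        ∃ s' : X,
          Tendsto (fun m => ∑ n ∈ Finset.range m, t n • z n) atTop (𝓝 s') ∧
          (1 - θ) * ‖s‖ ≤ ‖s'‖ ∧ ‖s'‖ ≤ (1 + θ) * ‖s‖ := by
  have hK1 : (1:ℝ) ≤ 𝒦 := hbasic.2.1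
  have hb : 0 < b := lt_of_lt_of_le ha ((hnorm 0).1.trans (hnorm 0).2)
  have htsum0 : 0 ≤ ∑' n, α n := tsum_nonneg (fun n => (hα n).le)
  have hzx : ∀ i, ‖z i - x i‖ ≤ 2 * b * α i := by
    intro i
    have : z i - x i = α i • (x (i + 1) - x i) := by rw [hz i]; module
    rw [this, norm_smul, Real.norm_eq_abs, abs_of_pos (hα i)]
    have h1 := norm_sub_le (x (i + 1)) (x i)
    have h2 := (hnorm (i + 1)).2
    have h3 := (hnorm i).2
    nlinarith [(hα i).le]
  constructor
  · refine ⟨(𝒦 + θ) / (1 - θ), ?_, ?_, ?_⟩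
    · -- z n ≠ 0
      intro n hzn
      have hαle : α n ≤ ∑' k, α k := Summable.le_tsum hsum n (fun k _ => (hα k).le)
      have h1 : ‖x n‖ ≤ 2 * b * α n := by
        have : ‖z n - x n‖ = ‖x n‖ := by rw [hzn]; simp
        linarith [hzx n, this.symm.le, hzx n]
      have h2 := (hnorm n).1
      have hb2 : 4 * b * 𝒦 * ∑' (k : ℕ), α k ≤ θ * a := by
        calc 4 * b * 𝒦 * ∑' (k : ℕ), α k = (4 * b * 𝒦 / a * ∑' (k : ℕ), α k) * a := by
              field_simp
          _ ≤ θ * a := mul_le_mul_of_nonneg_right hbound ha.le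
      nlinarith [mul_le_mul_of_nonneg_left hαle (by positivity : (0:ℝ) ≤ 2 * b),
        mul_nonneg (mul_nonneg (by linarith : (0:ℝ) ≤ 2 * b) htsum0)
          (by linarith : (0:ℝ) ≤ 𝒦 - 1)]
    · rw [le_div_iff₀ (by linarith)]; linarith
    · intro m n hmn c
      have hpm := pertBound x z 𝒦 a b θ α hbasic ha hnorm hα hsum hbound hz c m n hmn
      have hpn := pertBound x z 𝒦 a b θ α hbasic ha hnorm hα hsum hbound hz c n n le_rfl
      have hbm := hbasic.2.2 m n hmn c
      set Sm := ∑ i ∈ Finset.range m, c i • x i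
      set Sn := ∑ i ∈ Finset.range n, c i • x i
      set Zm := ∑ i ∈ Finset.range m, c i • z i
      set Zn := ∑ i ∈ Finset.range n, c i • z i
      have h1 : ‖Zm‖ ≤ (𝒦 + θ) * ‖Sn‖ := by
        have := norm_sub_le Zm Sm  -- not quite; use triangle
        have h := norm_le_norm_add_norm_sub' Zm Sm
        -- ‖Zm‖ ≤ ‖Sm‖ + ‖Zm - Sm‖
        nlinarith [norm_nonneg Sn]
      have h2 : (1 - θ) * ‖Sn‖ ≤ ‖Zn‖ := by
        have h := norm_le_norm_add_norm_sub' Sn Zn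
        have : ‖Sn - Zn‖ = ‖Zn - Sn‖ := norm_sub_rev _ _
        nlinarith
      have hq : (0:ℝ) < 1 - θ := by linarith
      rw [div_mul_eq_mul_div, le_div_iff₀ hq]
      nlinarith [norm_nonneg Sn, norm_nonneg Zm]
  · intro t s htend
    have hts : ∀ i, |t i| * a ≤ 2 * 𝒦 * ‖s‖ := by
      intro i
      have htn : Tendsto (fun m => 2 * 𝒦 * ‖∑ n ∈ Finset.range m, t n • x n‖) atTop
          (𝓝 (2 * 𝒦 * ‖s‖)) := (htend.norm).const_mul _
      refine ge_of_tendsto htn ?_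
      filter_upwards [eventually_ge_atTop (i + 1)] with m hm
      exact coeffBound x 𝒦 a hbasic (fun k => (hnorm k).1) t (lt_of_lt_of_le (Nat.lt_succ_self i) hm)
    set g : ℕ → X := fun n => t n • (z n - x n) with hg
    have hgnorm : ∀ n, ‖g n‖ ≤ (4 * b * 𝒦 / a * ‖s‖) * α n := by
      intro n
      have h1 : ‖g n‖ = |t n| * ‖z n - x n‖ := by
        rw [hg]; rw [norm_smul, Real.norm_eq_abs]
      have hti : |t n| ≤ 2 * 𝒦 * ‖s‖ / a := by rw [le_div_iff₀ ha]; exact hts n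
      have h2 : |t n| * ‖z n - x n‖ ≤ (2 * 𝒦 * ‖s‖ / a) * (2 * b * α n) := by
        apply mul_le_mul hti (hzx n) (norm_nonneg _)
        positivity
      rw [h1]
      calc |t n| * ‖z n - x n‖ ≤ (2 * 𝒦 * ‖s‖ / a) * (2 * b * α n) := h2
        _ = (4 * b * 𝒦 / a * ‖s‖) * α n := by ring
    have hgsum : Summable g :=
      Summable.of_norm_bounded (hsum.mul_left _) hgnorm
    obtain ⟨d, hd⟩ := hgsum
    refine ⟨s + d, ?_, ?_, ?_⟩
    · have h1 : Tendsto (fun m => (∑ n ∈ Finset.range m, t n • x n) +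
          ∑ n ∈ Finset.range m, g n) atTop (𝓝 (s + d)) :=
        htend.add hd.tendsto_sum_nat
      refine h1.congr (fun m => ?_)
      rw [hg, ← Finset.sum_add_distrib]
      congr 1; ext n; rw [smul_sub]; abel
    · have hdnorm : ‖d‖ ≤ θ * ‖s‖ := by
        have hns : Summable fun n => ‖g n‖ :=
          Summable.of_nonneg_of_le (fun n => norm_nonneg _) hgnorm (hsum.mul_left _)
        have h1 : ‖d‖ ≤ ∑' n, ‖g n‖ := by
          rw [hd.tsum_eq.symm] at *
          exact norm_tsum_le_tsum_norm hns
        have h2 : ∑' n, ‖g n‖ ≤ ∑' n, (4 * b * 𝒦 / a * ‖s‖) * α n :=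
          Summable.tsum_le_tsum hgnorm hns (hsum.mul_left _)
        have h3 : ∑' n, (4 * b * 𝒦 / a * ‖s‖) * α n = (4 * b * 𝒦 / a * ‖s‖) * ∑' n, α n :=
          tsum_mul_left
        have h4 : (4 * b * 𝒦 / a * ‖s‖) * ∑' n, α n ≤ θ * ‖s‖ := by
          have := mul_le_mul_of_nonneg_right hbound (norm_nonneg s)
          nlinarith [norm_nonneg s]
        linarith
      have := norm_add_le s d
      have h5 : ‖s‖ ≤ ‖s + d‖ + ‖d‖ := by
        calc ‖s‖ = ‖(s + d) - d‖ := by rw [add_sub_cancel_right]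
          _ ≤ ‖s + d‖ + ‖d‖ := norm_sub_le _ _
      linarith
    · have hdnorm : ‖d‖ ≤ θ * ‖s‖ := by
        have hns : Summable fun n => ‖g n‖ :=
          Summable.of_nonneg_of_le (fun n => norm_nonneg _) hgnorm (hsum.mul_left _)
        have h1 : ‖d‖ ≤ ∑' n, ‖g n‖ := by
          rw [hd.tsum_eq.symm] at *
          exact norm_tsum_le_tsum_norm hns
        have h2 : ∑' n, ‖g n‖ ≤ ∑' n, (4 * b * 𝒦 / a * ‖s‖) * α n :=
          Summable.tsum_le_tsum hgnorm hns (hsum.mul_left _)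
        have h3 : ∑' n, (4 * b * 𝒦 / a * ‖s‖) * α n = (4 * b * 𝒦 / a * ‖s‖) * ∑' n, α n :=
          tsum_mul_left
        have h4 : (4 * b * 𝒦 / a * ‖s‖) * ∑' n, α n ≤ θ * ‖s‖ := by
          have := mul_le_mul_of_nonneg_right hbound (norm_nonneg s)
          nlinarith [norm_nonneg s]
        linarith
      have := norm_add_le s d
      linarith


end
end

section
/- Let X be a real Banach space with Pełczyński's property (u). Then every non-trivial weak Cauchy sequence in X has a convex block sequence that is equivalent to the summing basis of c₀. -/
open Filter Topology

noncomputable section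

variable {E : Type*} [NormedAddCommGroup E] [NormedSpace ℝ E]

open NormedSpace

namespace SummingBasisAux

variable {X : Type*} [NormedAddCommGroup X] [NormedSpace ℝ X]

theorem bdd_of_tendsto {u : ℕ → ℝ} {l : ℝ} (h : Tendsto u atTop (𝓝 l)) :
    ∃ C, ∀ n, |u n| ≤ C := by
  obtain ⟨N, hN⟩ := Metric.tendsto_atTop.1 h 1 one_pos
  refine ⟨(∑ i ∈ Finset.range (N + 1), |u i|) + (|l| + 1), fun n => ?_⟩
  have hsumnn : (0:ℝ) ≤ ∑ i ∈ Finset.range (N + 1), |u i| :=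
    Finset.sum_nonneg fun _ _ => abs_nonneg _
  have hl : (0:ℝ) ≤ |l| + 1 := by positivity
  rcases lt_or_ge n (N + 1) with hn | hn
  · have h1 : |u n| ≤ ∑ i ∈ Finset.range (N + 1), |u i| :=
      Finset.single_le_sum (fun i _ => abs_nonneg (u i)) (Finset.mem_range.2 hn)
    linarith
  · have h2 := hN n (by omega)
    rw [Real.dist_eq] at h2
    have h3 : |u n| ≤ |l| + 1 := by
      have h4 := abs_sub_abs_le_abs_sub (u n) l
      linarith
    linarith

theorem bound_of_weakly_bounded {ι : Type} (v : ι → X)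
    (h : ∀ f : StrongDual ℝ X, ∃ C, ∀ i, |f (v i)| ≤ C) :
    ∃ B, 0 ≤ B ∧ ∀ i, ‖v i‖ ≤ B := by
  obtain ⟨C', hC'⟩ := banach_steinhaus (g := fun i => inclusionInDoubleDual ℝ X (v i))
    (fun f => by
      obtain ⟨C, hC⟩ := h f
      exact ⟨C, fun i => by simpa [Real.norm_eq_abs] using hC i⟩)
  refine ⟨max C' 0, le_max_right _ _, fun i => ?_⟩
  have hn : ‖v i‖ = ‖inclusionInDoubleDual ℝ X (v i)‖ :=
    ((inclusionInDoubleDualLi ℝ (E := X)).norm_map (v i)).symm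
  rw [hn]
  exact le_max_of_le_left (hC' i)

theorem wuc_bound (y : ℕ → X)
    (hy : ∀ f : StrongDual ℝ X, Summable fun n => |f (y n)|) :
    ∃ C, 0 ≤ C ∧ ∀ (A : Finset ℕ) (c : ℕ → ℝ) (M : ℝ), 0 ≤ M → (∀ i, |c i| ≤ M) →
      ‖∑ i ∈ A, c i • y i‖ ≤ C * M := by
  obtain ⟨B, hB0, hB⟩ := bound_of_weakly_bounded
    (ι := {q : Finset ℕ × (ℕ → ℝ) // ∀ i, |q.2 i| ≤ 1})
    (fun q => ∑ i ∈ q.1.1, q.1.2 i • y i) (fun f => by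
      refine ⟨∑' n, |f (y n)|, fun q => ?_⟩
      have he : f (∑ i ∈ q.1.1, q.1.2 i • y i) = ∑ i ∈ q.1.1, q.1.2 i * f (y i) := by
        rw [map_sum]; simp
      rw [he]
      calc |∑ i ∈ q.1.1, q.1.2 i * f (y i)| ≤ ∑ i ∈ q.1.1, |q.1.2 i * f (y i)| :=
            Finset.abs_sum_le_sum_abs _ _
        _ ≤ ∑ i ∈ q.1.1, |f (y i)| := Finset.sum_le_sum fun i _ => by
            rw [abs_mul]; exact mul_le_of_le_one_left (abs_nonneg _) (q.2 i)
        _ ≤ ∑' n, |f (y n)| := Summable.sum_le_tsum _ (fun i _ => abs_nonneg _) (hy f))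
  refine ⟨B, hB0, fun A c M hM0 hM => ?_⟩
  rcases eq_or_lt_of_le hM0 with hM0' | hM0'
  · have hc : ∀ i, c i = 0 := fun i => by
      have := hM i; rw [← hM0'] at this
      exact abs_eq_zero.1 (le_antisymm this (abs_nonneg _))
    have : ∑ i ∈ A, c i • y i = 0 := by
      refine Finset.sum_eq_zero fun i _ => by rw [hc i, zero_smul]
    rw [this, norm_zero]
    exact mul_nonneg hB0 hM0
  · have key := hB ⟨(A, fun i => c i / M), fun i => by
      rw [abs_div, abs_of_pos hM0', div_le_one hM0']
      exact hM i⟩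
    have he : ∑ i ∈ A, c i • y i = M • ∑ i ∈ A, (c i / M) • y i := by
      rw [Finset.smul_sum]
      refine Finset.sum_congr rfl fun i _ => ?_
      rw [smul_smul]
      congr 1
      field_simp
    rw [he, norm_smul, Real.norm_eq_abs, abs_of_pos hM0', mul_comm B M]
    exact mul_le_mul_of_nonneg_left key hM0'.le

theorem abel_bound (m : ℕ) (a μ : ℕ → ℝ) (h0 : 0 ≤ μ 0) (h1 : μ m ≤ 1)
    (hmono : ∀ j j', j ≤ j' → μ j ≤ μ j') {M : ℝ} (hM0 : 0 ≤ M)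
    (hM : ∀ k, k ≤ m → |∑ i ∈ Finset.Icc k m, a i| ≤ M) :
    |∑ j ∈ Finset.range (m + 1), a j * μ j| ≤ M := by
  set ν : ℕ → ℝ := fun j => Nat.casesOn j 0 μ with hν
  have hν0 : ν 0 = 0 := rfl
  have hνs : ∀ j, ν (j + 1) = μ j := fun j => rfl
  have hΔ : ∀ j, 0 ≤ ν (j + 1) - ν j := by
    intro j
    cases j with
    | zero => simpa [hν0, hνs] using h0
    | succ k => simp only [hνs]; have := hmono k (k+1) (by omega); linarith
  have key : ∑ j ∈ Finset.range (m + 1), a j * μ j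
      = ∑ j ∈ Finset.range (m + 1), (ν (j+1) - ν j) * (∑ i ∈ Finset.Icc j m, a i) := by
    have swap : ∑ j ∈ Finset.range (m + 1), ∑ i ∈ Finset.Icc j m, (ν (j+1) - ν j) * a i
        = ∑ i ∈ Finset.range (m + 1), ∑ j ∈ Finset.range (i + 1), (ν (j+1) - ν j) * a i := by
      refine Finset.sum_comm' ?_
      intro j i
      simp only [Finset.mem_range, Finset.mem_Icc]
      omega
    calc ∑ j ∈ Finset.range (m+1), a j * μ j
        = ∑ i ∈ Finset.range (m+1), (∑ j ∈ Finset.range (i+1), (ν (j+1) - ν j)) * a i := by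
          refine Finset.sum_congr rfl fun i _ => ?_
          rw [Finset.sum_range_sub ν (i+1), hν0, sub_zero, hνs, mul_comm]
      _ = ∑ i ∈ Finset.range (m+1), ∑ j ∈ Finset.range (i+1), (ν (j+1) - ν j) * a i := by
          refine Finset.sum_congr rfl fun i _ => ?_
          rw [Finset.sum_mul]
      _ = ∑ j ∈ Finset.range (m + 1), ∑ i ∈ Finset.Icc j m, (ν (j+1) - ν j) * a i := swap.symm
      _ = ∑ j ∈ Finset.range (m + 1), (ν (j+1) - ν j) * ∑ i ∈ Finset.Icc j m, a i := by
          refine Finset.sum_congr rfl fun j _ => ?_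
          rw [Finset.mul_sum]
  rw [key]
  calc |∑ j ∈ Finset.range (m+1), (ν (j+1) - ν j) * (∑ i ∈ Finset.Icc j m, a i)|
      ≤ ∑ j ∈ Finset.range (m+1), |(ν (j+1) - ν j) * (∑ i ∈ Finset.Icc j m, a i)| :=
        Finset.abs_sum_le_sum_abs _ _
    _ ≤ ∑ j ∈ Finset.range (m+1), (ν (j+1) - ν j) * M := by
        refine Finset.sum_le_sum fun j hj => ?_
        rw [abs_mul, abs_of_nonneg (hΔ j)]
        exact mul_le_mul_of_nonneg_left (hM j (Nat.lt_succ_iff.1 (Finset.mem_range.1 hj))) (hΔ j)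
    _ = (ν (m+1) - ν 0) * M := by rw [← Finset.sum_mul, Finset.sum_range_sub]
    _ = μ m * M := by rw [hν0, sub_zero, hνs]
    _ ≤ 1 * M := mul_le_mul_of_nonneg_right h1 hM0
    _ = M := one_mul M

theorem mazur_step (z : ℕ → X) (hz : ∀ f : StrongDual ℝ X, Tendsto (fun n => f (z n)) atTop (𝓝 0))
    (N : ℕ) {ε : ℝ} (hε : 0 < ε) :
    ∃ (F : Finset ℕ) (lam : ℕ → ℝ), F.Nonempty ∧ (∀ i ∈ F, N ≤ i) ∧ (∀ i, 0 ≤ lam i) ∧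
      (∑ i ∈ F, lam i) = 1 ∧ ‖∑ i ∈ F, lam i • z i‖ ≤ ε := by
  classical
  have h0 : (0 : X) ∈ closure (convexHull ℝ (z '' Set.Ici N)) := by
    by_contra h0
    obtain ⟨f, u, hfu, hub⟩ := geometric_hahn_banach_point_closed
      ((convex_convexHull ℝ _).closure) isClosed_closure h0
    rw [map_zero] at hfu
    have hmem : ∀ n ≥ N, u < f (z n) := fun n hn =>
      hub _ (subset_closure (subset_convexHull ℝ _ ⟨n, hn, rfl⟩))
    have hev : ∀ᶠ n in atTop, f (z n) < u := (hz f).eventually_lt_const hfu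
    obtain ⟨n, hn1, hn2⟩ := (hev.and (eventually_ge_atTop N)).exists
    exact absurd (hmem n hn2) (by linarith)
  obtain ⟨b, hb, hbd⟩ := Metric.mem_closure_iff.1 h0 ε hε
  rw [convexHull_eq] at hb
  obtain ⟨ι, t, wt, zf, hw0, hw1, hzs, hcm⟩ := hb
  rw [Finset.centerMass_eq_of_sum_1 _ _ hw1] at hcm
  have hch : ∀ i ∈ t, ∃ p, N ≤ p ∧ z p = zf i := by
    intro i hi
    obtain ⟨p, hp, hzp⟩ := hzs i hi
    exact ⟨p, hp, hzp⟩
  choose! n hn1 hn2 using hch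
  have htne : t.Nonempty := Finset.nonempty_of_sum_ne_zero (by rw [hw1]; exact one_ne_zero)
  refine ⟨t.image n, fun p => ∑ i ∈ t.filter (fun i => n i = p), wt i,
    htne.image n, ?_, ?_, ?_, ?_⟩
  · intro p hp
    obtain ⟨i, hi, rfl⟩ := Finset.mem_image.1 hp
    exact hn1 i hi
  · intro p
    exact Finset.sum_nonneg fun i hi => hw0 i (Finset.mem_filter.1 hi).1
  · rw [Finset.sum_fiberwise_of_maps_to (fun i hi => Finset.mem_image_of_mem n hi) wt]
    exact hw1
  · have hsum : ∑ p ∈ t.image n, (∑ i ∈ t.filter (fun i => n i = p), wt i) • z p = b := by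
      rw [← hcm,
        ← Finset.sum_fiberwise_of_maps_to (fun i hi => Finset.mem_image_of_mem n hi)
          (fun i => wt i • zf i)]
      refine Finset.sum_congr rfl fun p _ => ?_
      rw [Finset.sum_smul]
      refine Finset.sum_congr rfl fun i hi => ?_
      obtain ⟨hit, hni⟩ := Finset.mem_filter.1 hi
      rw [← hn2 i hit, hni]
    rw [hsum]
    rw [dist_zero_left] at hbd
    exact hbd.le

theorem helly (Λ : StrongDual ℝ (StrongDual ℝ X)) {d : ℝ} (hd0 : 0 < d)
    (hd : ∀ v : X, d ≤ ‖Λ - inclusionInDoubleDual ℝ X v‖) {δ : ℝ} (hδ : 0 < δ)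
    (k : ℕ) (w : ℕ → X) :
    ∃ f : StrongDual ℝ X, ‖f‖ ≤ 1 ∧ (∀ i < k, f (w i) = 0) ∧ d - δ < Λ f := by
  classical
  by_contra hcon
  push_neg at hcon
  set L : Fin k → (StrongDual ℝ X) →ₗ[ℝ] ℝ :=
    fun i => (inclusionInDoubleDual ℝ X (w i) : (StrongDual ℝ X) →L[ℝ] ℝ) with hL
  set p : Submodule ℝ (StrongDual ℝ X) := ⨅ i : Fin k, LinearMap.ker (L i) with hp
  have hmem : ∀ f : StrongDual ℝ X, f ∈ p ↔ ∀ i < k, f (w i) = 0 := by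
    intro f
    rw [hp, Submodule.mem_iInf]
    constructor
    · intro h i hi
      have := h ⟨i, hi⟩
      rwa [LinearMap.mem_ker] at this
    · intro h i
      rw [LinearMap.mem_ker]
      exact h i i.2
  have claim : ∀ g : StrongDual ℝ X, g ∈ p → |Λ g| ≤ max (d - δ) 0 * ‖g‖ := by
    intro g hg
    rcases eq_or_ne g 0 with rfl | hg0
    · simp
    · have hng : 0 < ‖g‖ := norm_pos_iff.2 hg0
      have hnorm1 : ‖(‖g‖⁻¹ • g)‖ ≤ 1 := by
        rw [norm_smul, Real.norm_eq_abs, abs_of_nonneg (inv_nonneg.2 hng.le),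
          inv_mul_cancel₀ hng.ne']
      have hzero : ∀ i < k, (‖g‖⁻¹ • g) (w i) = 0 := fun i hi => by
        rw [ContinuousLinearMap.smul_apply, (hmem g).1 hg i hi, smul_zero]
      have h2 := hcon _ hnorm1 hzero
      have hzero' : ∀ i < k, (-(‖g‖⁻¹ • g)) (w i) = 0 := fun i hi => by
        rw [ContinuousLinearMap.neg_apply, hzero i hi, neg_zero]
      have h3 := hcon _ (by rw [norm_neg]; exact hnorm1) hzero'
      have e2 : Λ (‖g‖⁻¹ • g) = ‖g‖⁻¹ * Λ g := by rw [map_smul, smul_eq_mul]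
      have e3 : Λ (-(‖g‖⁻¹ • g)) = -(‖g‖⁻¹ * Λ g) := by rw [map_neg, e2]
      rw [e2] at h2
      rw [e3] at h3
      have habs : |‖g‖⁻¹ * Λ g| ≤ max (d - δ) 0 := by
        rw [abs_le]
        constructor
        · have := le_max_left (d - δ) 0
          linarith
        · exact le_trans h2 (le_max_left _ _)
      have hrw : |Λ g| = |‖g‖⁻¹ * Λ g| * ‖g‖ := by
        rw [abs_mul, abs_of_nonneg (inv_nonneg.2 hng.le)]
        field_simp
      rw [hrw]
      exact mul_le_mul_of_nonneg_right habs hng.le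
  obtain ⟨Λ'', hext, hnorm⟩ := exists_extension_norm_eq p (Λ.comp p.subtypeL)
  have hΛp : ‖Λ''‖ ≤ max (d - δ) 0 := by
    rw [hnorm]
    refine ContinuousLinearMap.opNorm_le_bound _ (le_max_right _ _) fun g => ?_
    simpa [Real.norm_eq_abs] using claim g g.2
  have hker : ⨅ i : Fin k, LinearMap.ker (L i)
      ≤ LinearMap.ker ((Λ - Λ'' : StrongDual ℝ X →L[ℝ] ℝ) : StrongDual ℝ X →ₗ[ℝ] ℝ) := by
    intro f hf
    have hfp : f ∈ p := by rw [hp]; exact hf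
    have he : Λ'' f = Λ f := by
      have := hext ⟨f, hfp⟩
      simpa using this
    simp only [LinearMap.mem_ker, ContinuousLinearMap.coe_sub, LinearMap.sub_apply,
      ContinuousLinearMap.coe_coe, ContinuousLinearMap.sub_apply]
    rw [he]
    ring
  have hspan := mem_span_of_iInf_ker_le_ker (L := L) hker
  obtain ⟨c, hc⟩ := (Submodule.mem_span_range_iff_exists_fun ℝ).1 hspan
  set v : X := ∑ i : Fin k, c i • w i with hv
  have hJv : inclusionInDoubleDual ℝ X v = Λ - Λ'' := by
    ext f
    have happ := LinearMap.congr_fun hc f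
    simp only [LinearMap.coe_sum, Finset.sum_apply, LinearMap.smul_apply, smul_eq_mul] at happ
    have h1 : inclusionInDoubleDual ℝ X v f = f v := rfl
    rw [h1, hv, map_sum]
    simp only [map_smul, smul_eq_mul]
    convert happ using 2 <;> rfl
  have hfinal := hd v
  rw [hJv, show Λ - (Λ - Λ'') = Λ'' from sub_sub_cancel Λ Λ''] at hfinal
  have hlt : max (d - δ) 0 < d := max_lt (by linarith) hd0
  linarith [hΛp]

theorem step_exists (x s : ℕ → X) (Λ : StrongDual ℝ (StrongDual ℝ X))
    (hx : ∀ f : StrongDual ℝ X, Tendsto (fun n => f (x n)) atTop (𝓝 (Λ f)))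
    (hz : ∀ f : StrongDual ℝ X, Tendsto (fun n => f (x n - s n)) atTop (𝓝 0))
    (j N : ℕ) (g : ℕ → StrongDual ℝ X) {ε : ℝ} (hε : 0 < ε) :
    ∃ (F : Finset ℕ) (lam : ℕ → ℝ), F.Nonempty ∧ (∀ i ∈ F, N ≤ i) ∧ (∀ i, 0 ≤ lam i) ∧
      (∑ i ∈ F, lam i) = 1 ∧ ‖∑ i ∈ F, lam i • (x i - s i)‖ ≤ ε ∧
      ∀ k ≤ j, |g k (∑ i ∈ F, lam i • x i) - Λ (g k)| ≤ ε := by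
  classical
  have hNk : ∀ k, ∃ Nk, ∀ n, Nk ≤ n → |g k (x n) - Λ (g k)| < ε := by
    intro k
    obtain ⟨Nk, hNk⟩ := Metric.tendsto_atTop.1 (hx (g k)) ε hε
    exact ⟨Nk, fun n hn => by rw [← Real.dist_eq]; exact hNk n hn⟩
  choose Nf hNf using hNk
  obtain ⟨F, lam, hFne, hFge, hlam0, hlam1, hnorm⟩ :=
    mazur_step (fun i => x i - s i) hz (max N ((Finset.range (j+1)).sup Nf)) hε
  refine ⟨F, lam, hFne, fun i hi => le_trans (le_max_left _ _) (hFge i hi), hlam0, hlam1,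
    hnorm, ?_⟩
  intro k hk
  have hgk : g k (∑ i ∈ F, lam i • x i) = ∑ i ∈ F, lam i * g k (x i) := by
    rw [map_sum]; simp
  have hΛgk : Λ (g k) = ∑ i ∈ F, lam i * Λ (g k) := by
    rw [← Finset.sum_mul, hlam1, one_mul]
  rw [hgk, hΛgk, ← Finset.sum_sub_distrib]
  calc |∑ i ∈ F, (lam i * g k (x i) - lam i * Λ (g k))|
      ≤ ∑ i ∈ F, |lam i * g k (x i) - lam i * Λ (g k)| := Finset.abs_sum_le_sum_abs _ _
    _ ≤ ∑ i ∈ F, lam i * ε := by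
        refine Finset.sum_le_sum fun i hi => ?_
        rw [← mul_sub, abs_mul, abs_of_nonneg (hlam0 i)]
        refine mul_le_mul_of_nonneg_left ?_ (hlam0 i)
        have hiN : Nf k ≤ i :=
          le_trans (le_trans (Finset.le_sup (Finset.mem_range.2 (by omega)))
            (le_max_right _ _)) (hFge i hi)
        exact le_of_lt (hNf k i hiN)
    _ = ε := by rw [← Finset.sum_mul, hlam1, one_mul]

end SummingBasisAux


open SummingBasisAux in
set_option maxHeartbeats 2000000 in
/-- in a Banach space with Pełczyński's property (u), every non-trivial
weak Cauchy sequence has a convex block sequence equivalent to the summing basis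
of `c₀`. -/
theorem exists_convexBlock_equivSummingBasis_of_propertyU
    {X : Type*} [NormedAddCommGroup X] [NormedSpace ℝ X] [CompleteSpace X]
    (hu : PropertyU X) (x : ℕ → X)
    (hwc : WeakCauchySeq x) (hnwconv : ¬ ∃ z, WeakLim x z) :
    ∃ w : ℕ → X, IsConvexBlockSeq w x ∧ EquivSummingBasis w := by
  classical
  -- Step 1: property (u) data
  obtain ⟨y, hy_sum, hy_wl⟩ := hu x hwc
  set s : ℕ → X := fun n => ∑ i ∈ Finset.range (n+1), y i with hs
  have hz : ∀ f : StrongDual ℝ X, Tendsto (fun n => f (x n - s n)) atTop (𝓝 0) := by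
    intro f
    have h := hy_wl f
    rw [map_zero] at h
    exact h
  -- Step 2: x is bounded
  have hb : ∀ f : StrongDual ℝ X, ∃ C, ∀ n, |f (x n)| ≤ C := fun f => by
    obtain ⟨l, hl⟩ := hwc f
    exact bdd_of_tendsto hl
  obtain ⟨B, hB0, hBx⟩ := bound_of_weakly_bounded x hb
  -- Step 3: the weak* limit functional Λ
  have hlim : ∀ f : StrongDual ℝ X,
      Tendsto (fun n => f (x n)) atTop (𝓝 ((hwc f).choose)) := fun f => (hwc f).choose_spec
  have hadd : ∀ f g : StrongDual ℝ X,
      (hwc (f + g)).choose = (hwc f).choose + (hwc g).choose := by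
    intro f g
    exact tendsto_nhds_unique (hlim (f+g)) ((hlim f).add (hlim g))
  have hsmul : ∀ (c : ℝ) (f : StrongDual ℝ X),
      (hwc (c • f)).choose = c * (hwc f).choose := by
    intro c f
    exact tendsto_nhds_unique (hlim (c • f)) ((hlim f).const_mul c)
  set Λl : StrongDual ℝ X →ₗ[ℝ] ℝ :=
    { toFun := fun f => (hwc f).choose, map_add' := hadd, map_smul' := hsmul } with hΛl
  have hΛb : ∀ f : StrongDual ℝ X, ‖Λl f‖ ≤ B * ‖f‖ := by
    intro f
    rw [Real.norm_eq_abs]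
    refine le_of_tendsto (hlim f).abs (Filter.Eventually.of_forall fun n => ?_)
    calc |f (x n)| = ‖f (x n)‖ := (Real.norm_eq_abs _).symm
      _ ≤ ‖f‖ * ‖x n‖ := f.le_opNorm (x n)
      _ ≤ ‖f‖ * B := mul_le_mul_of_nonneg_left (hBx n) (norm_nonneg f)
      _ = B * ‖f‖ := mul_comm _ _
  set Λ : StrongDual ℝ (StrongDual ℝ X) := Λl.mkContinuous B hΛb with hΛdef
  have hΛ : ∀ f : StrongDual ℝ X, Tendsto (fun n => f (x n)) atTop (𝓝 (Λ f)) :=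
    fun f => hlim f
  -- Step 4: positive distance from the image of X
  have hnotin : ∀ v : X, Λ ≠ NormedSpace.inclusionInDoubleDual ℝ X v := by
    intro v hv
    refine hnwconv ⟨v, fun f => ?_⟩
    have he : Λ f = f v := by rw [hv]; rfl
    rw [← he]
    exact hΛ f
  have hclosed : IsClosed (Set.range (NormedSpace.inclusionInDoubleDual ℝ X)) := by
    have hiso : Isometry (NormedSpace.inclusionInDoubleDual ℝ X) :=
      (NormedSpace.inclusionInDoubleDualLi ℝ (E := X)).isometry
    exact hiso.isClosedEmbedding.isClosed_range
  have hΛnm : Λ ∈ (Set.range (NormedSpace.inclusionInDoubleDual ℝ X))ᶜ := by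
    rintro ⟨v, hv⟩
    exact hnotin v hv.symm
  obtain ⟨d, hd0, hball⟩ := Metric.isOpen_iff.1 hclosed.isOpen_compl Λ hΛnm
  have hd : ∀ v : X, d ≤ ‖Λ - NormedSpace.inclusionInDoubleDual ℝ X v‖ := by
    intro v
    by_contra hlt
    push_neg at hlt
    have hmem : NormedSpace.inclusionInDoubleDual ℝ X v ∈ Metric.ball Λ d := by
      rw [Metric.mem_ball, dist_comm]
      exact (dist_eq_norm Λ (NormedSpace.inclusionInDoubleDual ℝ X v)).trans_lt hlt
    exact hball hmem ⟨v, rfl⟩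
  -- Step 5: the wuC constant
  obtain ⟨C, hC0, hC⟩ := wuc_bound y hy_sum
  -- Step 6: the error tolerances
  set εf : ℕ → ℝ := fun j => d/32 * (1/2)^j with hεf
  have hεfpos : ∀ j, 0 < εf j := fun j => by rw [hεf]; positivity
  have hεsum : ∀ n, ∑ j ∈ Finset.range n, εf j ≤ d/16 := by
    intro n
    rw [hεf]
    dsimp only
    rw [← Finset.mul_sum]
    calc d/32 * ∑ j ∈ Finset.range n, ((1:ℝ)/2)^j ≤ d/32 * 2 :=
        mul_le_mul_of_nonneg_left (sum_geometric_two_le n) (by positivity)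
      _ = d/16 := by ring
  have hεsub : ∀ (A : Finset ℕ) (n : ℕ), A ⊆ Finset.range n → ∑ j ∈ A, εf j ≤ d/16 :=
    fun A n hA => le_trans
      (Finset.sum_le_sum_of_subset_of_nonneg hA (fun j _ _ => (hεfpos j).le)) (hεsum n)
  -- Step 7: the inductive construction
  have exnew : ∀ (j : ℕ) (h : ℕ → (StrongDual ℝ X) × Finset ℕ × (ℕ → ℝ)),
      ∃ st : (StrongDual ℝ X) × Finset ℕ × (ℕ → ℝ),
        ‖st.1‖ ≤ 1 ∧
        (∀ i < j, st.1 (∑ q ∈ (h i).2.1, (h i).2.2 q • x q) = 0) ∧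
        d - d/4 < Λ st.1 ∧
        st.2.1.Nonempty ∧
        (∀ i < j, ∀ p ∈ (h i).2.1, ∀ q ∈ st.2.1, p < q) ∧
        (∀ i, 0 ≤ st.2.2 i) ∧ (∑ i ∈ st.2.1, st.2.2 i) = 1 ∧
        ‖∑ i ∈ st.2.1, st.2.2 i • (x i - s i)‖ ≤ εf j ∧
        (∀ k ≤ j, |(if k = j then st.1 else (h k).1) (∑ i ∈ st.2.1, st.2.2 i • x i)
            - Λ (if k = j then st.1 else (h k).1)| ≤ εf j) := by
    intro j h
    obtain ⟨f, hf1, hf2, hf3⟩ := helly Λ hd0 hd (δ := d/4) (by positivity) j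
      (fun i => ∑ q ∈ (h i).2.1, (h i).2.2 q • x q)
    obtain ⟨F, lam, hF1, hF2, hF3, hF4, hF5, hF6⟩ :=
      step_exists x s Λ hΛ hz j (1 + (Finset.range j).sup (fun i => (h i).2.1.sup id))
        (fun k => if k = j then f else (h k).1) (hεfpos j)
    refine ⟨(f, F, lam), hf1, hf2, hf3, hF1, ?_, hF3, hF4, hF5, hF6⟩
    intro i hij p hp q hq
    have h1 : p ≤ (h i).2.1.sup id := Finset.le_sup (f := id) hp
    have h2 : (h i).2.1.sup id ≤ (Finset.range j).sup (fun i => (h i).2.1.sup id) :=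
      Finset.le_sup (f := fun i => (h i).2.1.sup id) (Finset.mem_range.2 hij)
    have h3 := hF2 q hq
    omega
  set Hist : ℕ → ℕ → (StrongDual ℝ X) × Finset ℕ × (ℕ → ℝ) :=
    fun j => Nat.rec (fun _ => (0, ∅, fun _ => 0))
      (fun j ih => Function.update ih j ((exnew j ih).choose)) j with hHist
  have Hist_succ : ∀ j, Hist (j+1) = Function.update (Hist j) j ((exnew j (Hist j)).choose) :=
    fun j => rfl
  have Hist_succ_self : ∀ j, Hist (j+1) j = (exnew j (Hist j)).choose := by
    intro j
    rw [Hist_succ]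
    simp
  have Hist_eq : ∀ j i, i < j → Hist j i = Hist (i+1) i := by
    intro j
    induction j with
    | zero => intro i hi; omega
    | succ j ih =>
      intro i hi
      rcases Nat.lt_succ_iff_lt_or_eq.1 hi with hij | rfl
      · rw [Hist_succ, Function.update_of_ne (by omega : i ≠ j)]
        exact ih i hij
      · rfl
  set G : ℕ → (StrongDual ℝ X) × Finset ℕ × (ℕ → ℝ) := fun j => Hist (j+1) j with hG
  set fs : ℕ → StrongDual ℝ X := fun j => (G j).1 with hfs
  set Fs : ℕ → Finset ℕ := fun j => (G j).2.1 with hFs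
  set ls : ℕ → ℕ → ℝ := fun j => (G j).2.2 with hls
  set ws : ℕ → X := fun j => ∑ i ∈ Fs j, ls j i • x i with hws
  set vs : ℕ → X := fun j => ∑ i ∈ Fs j, ls j i • s i with hvs
  have hspec : ∀ j, ‖fs j‖ ≤ 1 ∧ (∀ i < j, fs j (ws i) = 0) ∧ d - d/4 < Λ (fs j) ∧
      (Fs j).Nonempty ∧ (∀ i < j, ∀ p ∈ Fs i, ∀ q ∈ Fs j, p < q) ∧
      (∀ i, 0 ≤ ls j i) ∧ (∑ i ∈ Fs j, ls j i) = 1 ∧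
      ‖∑ i ∈ Fs j, ls j i • (x i - s i)‖ ≤ εf j ∧
      (∀ k ≤ j, |fs k (ws j) - Λ (fs k)| ≤ εf j) := by
    intro j
    have hGj : G j = (exnew j (Hist j)).choose := Hist_succ_self j
    have hsp := (exnew j (Hist j)).choose_spec
    rw [← hGj] at hsp
    obtain ⟨h1, h2, h3, h4, h5, h6, h7, h8, h9⟩ := hsp
    refine ⟨h1, ?_, h3, h4, ?_, h6, h7, h8, ?_⟩
    · intro i hi
      have hh := h2 i hi
      rw [Hist_eq j i hi] at hh
      exact hh
    · intro i hi p hp q hq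
      refine h5 i hi p ?_ q hq
      rw [Hist_eq j i hi]
      exact hp
    · intro k hk
      rcases eq_or_lt_of_le hk with rfl | hk'
      · have hh := h9 k le_rfl
        rw [if_pos rfl] at hh
        exact hh
      · have hh := h9 k hk
        rw [if_neg (by omega), Hist_eq j k hk'] at hh
        exact hh
  have P1 : ∀ j, ‖fs j‖ ≤ 1 := fun j => (hspec j).1
  have P2 : ∀ j i, i < j → fs j (ws i) = 0 := fun j i h => (hspec j).2.1 i h
  have P3 : ∀ j, d - d/4 < Λ (fs j) := fun j => (hspec j).2.2.1
  have P4 : ∀ j, (Fs j).Nonempty := fun j => (hspec j).2.2.2.1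
  have P5 : ∀ j i, i < j → ∀ p ∈ Fs i, ∀ q ∈ Fs j, p < q := fun j i h => (hspec j).2.2.2.2.1 i h
  have P6 : ∀ j i, 0 ≤ ls j i := fun j => (hspec j).2.2.2.2.2.1
  have P7 : ∀ j, (∑ i ∈ Fs j, ls j i) = 1 := fun j => (hspec j).2.2.2.2.2.2.1
  have P8 : ∀ j, ‖∑ i ∈ Fs j, ls j i • (x i - s i)‖ ≤ εf j :=
    fun j => (hspec j).2.2.2.2.2.2.2.1
  have P9 : ∀ j k, k ≤ j → |fs k (ws j) - Λ (fs k)| ≤ εf j :=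
    fun j k h => (hspec j).2.2.2.2.2.2.2.2 k h
  -- Step 8: the global convex coefficients
  have huniq : ∀ {i j j'}, i ∈ Fs j → i ∈ Fs j' → j = j' := by
    intro i j j' hj hj'
    by_contra hne
    rcases Nat.lt_or_ge j j' with hlt | hge
    · exact lt_irrefl i (P5 j' j hlt i hj i hj')
    · have hlt' : j' < j := by omega
      exact lt_irrefl i (P5 j j' hlt' i hj' i hj)
  set lamG : ℕ → ℝ := fun i => if h : ∃ j, i ∈ Fs j then ls h.choose i else 0 with hlamG
  have hlamG_eq : ∀ j i, i ∈ Fs j → lamG i = ls j i := by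
    intro j i hi
    have hex : ∃ j', i ∈ Fs j' := ⟨j, hi⟩
    rw [hlamG]
    dsimp only
    rw [dif_pos hex, huniq hex.choose_spec hi]
  have hw_eq : ∀ j, ws j = ∑ i ∈ Fs j, lamG i • x i := by
    intro j
    rw [hws]
    exact (Finset.sum_congr rfl fun i hi => by rw [hlamG_eq j i hi]).symm
  refine ⟨ws, ⟨Fs, lamG, P4, ?_, ?_, ?_, ?_⟩, ?_⟩
  · intro j i hi i' hi'
    exact P5 (j+1) j (by omega) i hi i' hi'
  · intro i
    rw [hlamG]
    dsimp only
    split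
    · exact P6 _ i
    · exact le_rfl
  · intro j
    rw [← P7 j]
    exact Finset.sum_congr rfl fun i hi => hlamG_eq j i hi
  · intro j
    exact hw_eq j
  -- Step 9: equivalence with the summing basis
  refine ⟨max (max (2/d) (C + d)) 1, le_max_right _ _, ?_⟩
  intro m a
  set T : ℕ → ℝ := fun k => ∑ i ∈ Finset.Icc k m, a i with hT
  set M : ℝ := (Finset.range (m+1)).sup' Finset.nonempty_range_add_one (fun k => |T k|) with hM
  have hTM : ∀ k, k ≤ m → |T k| ≤ M := fun k hk =>
    Finset.le_sup' (f := fun k => |T k|) (Finset.mem_range.2 (by omega))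
  have hM0 : 0 ≤ M := le_trans (abs_nonneg (T 0)) (hTM 0 (by omega))
  have hTtop : T (m+1) = 0 := by
    rw [hT]
    dsimp only
    rw [Finset.Icc_eq_empty (by omega), Finset.sum_empty]
  have ha : ∀ j, j ≤ m → |a j| ≤ 2 * M := by
    intro j hj
    have hsplit : T j = a j + T (j+1) := by
      rw [hT]
      dsimp only
      rw [Finset.Icc_eq_cons_Ioc hj, Finset.sum_cons, ← Finset.Icc_add_one_left_eq_Ioc]
    have h1 : |T j| ≤ M := hTM j hj
    have h2 : |T (j+1)| ≤ M := by
      rcases Nat.lt_or_ge j m with hlt | hge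
      · exact hTM (j+1) (by omega)
      · have hjm : j = m := by omega
        rw [hjm, hTtop]
        simpa using hM0
    calc |a j| = |T j - T (j+1)| := by rw [hsplit]; congr 1; ring
      _ = |T j + -(T (j+1))| := by rw [sub_eq_add_neg]
      _ ≤ |T j| + |-(T (j+1))| := abs_add_le _ _
      _ = |T j| + |T (j+1)| := by rw [abs_neg]
      _ ≤ 2 * M := by linarith
  set u : X := ∑ i ∈ Finset.range (m+1), a i • ws i with hu_def
  have hfu : ∀ k, fs k u = ∑ j ∈ Finset.range (m+1), a j * fs k (ws j) := by
    intro k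
    rw [hu_def, map_sum]
    exact Finset.sum_congr rfl fun j _ => by rw [map_smul, smul_eq_mul]
  -- the lower estimate
  have claim1 : d/2 * M ≤ ‖u‖ := by
    obtain ⟨k, hkmem, hkeq⟩ :=
      Finset.exists_mem_eq_sup' (Finset.nonempty_range_add_one (n := m)) (fun k => |T k|)
    have hkm : k ≤ m := by
      have := Finset.mem_range.1 hkmem
      omega
    have e1 : fs k u = ∑ j ∈ Finset.Icc k m, a j * fs k (ws j) := by
      rw [hfu k, Finset.range_eq_Ico,
        ← Finset.sum_Ico_consecutive _ (Nat.zero_le k) (by omega : k ≤ m+1)]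
      have hz1 : ∑ j ∈ Finset.Ico 0 k, a j * fs k (ws j) = 0 := by
        refine Finset.sum_eq_zero fun j hj => ?_
        rw [P2 k j (Finset.mem_Ico.1 hj).2, mul_zero]
      rw [hz1, zero_add, Finset.Ico_add_one_right_eq_Icc]
    have e2 : fs k u = T k * Λ (fs k)
        + ∑ j ∈ Finset.Icc k m, a j * (fs k (ws j) - Λ (fs k)) := by
      rw [e1, hT]
      dsimp only
      rw [Finset.sum_mul, ← Finset.sum_add_distrib]
      exact Finset.sum_congr rfl fun j hj => by ring
    have herr : |∑ j ∈ Finset.Icc k m, a j * (fs k (ws j) - Λ (fs k))| ≤ 2 * M * (d/16) := by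
      calc |∑ j ∈ Finset.Icc k m, a j * (fs k (ws j) - Λ (fs k))|
          ≤ ∑ j ∈ Finset.Icc k m, |a j * (fs k (ws j) - Λ (fs k))| :=
            Finset.abs_sum_le_sum_abs _ _
        _ ≤ ∑ j ∈ Finset.Icc k m, 2 * M * εf j := by
            refine Finset.sum_le_sum fun j hj => ?_
            obtain ⟨hkj, hjm⟩ := Finset.mem_Icc.1 hj
            rw [abs_mul]
            exact mul_le_mul (ha j hjm) (P9 j k hkj) (abs_nonneg _) (by linarith)
        _ = 2 * M * ∑ j ∈ Finset.Icc k m, εf j := by rw [Finset.mul_sum]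
        _ ≤ 2 * M * (d/16) := by
            refine mul_le_mul_of_nonneg_left ?_ (by linarith)
            refine hεsub _ (m+1) fun j hj => Finset.mem_range.2 ?_
            have := (Finset.mem_Icc.1 hj).2
            omega
    have h3 : |T k| * (3*d/4) ≤ |T k * Λ (fs k)| := by
      rw [abs_mul]
      refine mul_le_mul_of_nonneg_left ?_ (abs_nonneg _)
      exact le_trans (by linarith [P3 k]) (le_abs_self _)
    have h4 : |T k| * (3*d/4) - 2*M*(d/16) ≤ |fs k u| := by
      rw [e2]
      have habs : |T k * Λ (fs k)| - |∑ j ∈ Finset.Icc k m, a j * (fs k (ws j) - Λ (fs k))|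
          ≤ |T k * Λ (fs k) + ∑ j ∈ Finset.Icc k m, a j * (fs k (ws j) - Λ (fs k))| := by
        have hh := abs_sub_abs_le_abs_sub (T k * Λ (fs k))
          (-(∑ j ∈ Finset.Icc k m, a j * (fs k (ws j) - Λ (fs k))))
        rw [abs_neg, sub_neg_eq_add] at hh
        exact hh
      linarith
    have h5 : |fs k u| ≤ ‖u‖ := by
      have hh := (fs k).le_opNorm u
      rw [Real.norm_eq_abs] at hh
      calc |fs k u| ≤ ‖fs k‖ * ‖u‖ := hh
        _ ≤ 1 * ‖u‖ := mul_le_mul_of_nonneg_right (P1 k) (norm_nonneg u)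
        _ = ‖u‖ := one_mul _
    have hTkM : |T k| = M := hkeq.symm
    rw [hTkM] at h3 h4
    have hdM : 0 ≤ d * M := mul_nonneg hd0.le hM0
    linarith
  -- the upper estimate
  set Pn : ℕ := 1 + (Finset.range (m+1)).sup (fun j => (Fs j).sup id) with hPn
  have hFP : ∀ j, j ≤ m → ∀ i ∈ Fs j, i < Pn := by
    intro j hj i hi
    have h1 : i ≤ (Fs j).sup id := Finset.le_sup (f := id) hi
    have h2 : (Fs j).sup id ≤ (Finset.range (m+1)).sup (fun j => (Fs j).sup id) :=
      Finset.le_sup (f := fun j => (Fs j).sup id) (Finset.mem_range.2 (by omega))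
    omega
  set μ : ℕ → ℕ → ℝ := fun j p => ∑ i ∈ (Fs j).filter (fun i => p ≤ i), ls j i with hμ
  set cc : ℕ → ℝ := fun p => ∑ j ∈ Finset.range (m+1), a j * μ j p with hcc
  have hμ0 : ∀ j p, 0 ≤ μ j p := fun j p =>
    Finset.sum_nonneg fun i _ => P6 j i
  have hμ1 : ∀ j p, μ j p ≤ 1 := by
    intro j p
    rw [hμ]
    dsimp only
    calc ∑ i ∈ (Fs j).filter (fun i => p ≤ i), ls j i ≤ ∑ i ∈ Fs j, ls j i :=
        Finset.sum_le_sum_of_subset_of_nonneg (Finset.filter_subset _ _)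
          (fun i _ _ => P6 j i)
      _ = 1 := P7 j
  have hμmono : ∀ p j j', j ≤ j' → μ j p ≤ μ j' p := by
    intro p j j' hjj'
    rcases eq_or_lt_of_le hjj' with rfl | hlt
    · exact le_rfl
    · by_cases hne : ((Fs j).filter (fun i => p ≤ i)).Nonempty
      · obtain ⟨i, hi⟩ := hne
        obtain ⟨hiF, hpi⟩ := Finset.mem_filter.1 hi
        have hfull : (Fs j').filter (fun i => p ≤ i) = Fs j' := by
          refine Finset.filter_true_of_mem fun q hq => ?_
          have := P5 j' j hlt i hiF q hq
          omega
        have : μ j' p = 1 := by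
          rw [hμ]
          dsimp only
          rw [hfull]
          exact P7 j'
        rw [this]
        exact hμ1 j p
      · rw [Finset.not_nonempty_iff_eq_empty] at hne
        have : μ j p = 0 := by
          rw [hμ]
          dsimp only
          rw [hne, Finset.sum_empty]
        rw [this]
        exact hμ0 j' p
  have hvj : ∀ j, j ≤ m → ∑ p ∈ Finset.range Pn, μ j p • y p = vs j := by
    intro j hj
    calc ∑ p ∈ Finset.range Pn, μ j p • y p
        = ∑ p ∈ Finset.range Pn, ∑ i ∈ (Fs j).filter (fun i => p ≤ i), ls j i • y p := by
          refine Finset.sum_congr rfl fun p _ => ?_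
          rw [hμ]
          dsimp only
          exact Finset.sum_smul
      _ = ∑ i ∈ Fs j, ∑ p ∈ Finset.range (i+1), ls j i • y p := by
          refine Finset.sum_comm' ?_
          intro p i
          simp only [Finset.mem_range, Finset.mem_filter]
          constructor
          · rintro ⟨hp, hiF, hpi⟩
            exact ⟨by omega, hiF⟩
          · rintro ⟨hpi, hiF⟩
            have := hFP j hj i hiF
            exact ⟨by omega, hiF, by omega⟩
      _ = ∑ i ∈ Fs j, ls j i • s i := by
          refine Finset.sum_congr rfl fun i hi => ?_
          rw [← Finset.smul_sum]
      _ = vs j := by rw [hvs]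
  have hident : ∑ j ∈ Finset.range (m+1), a j • vs j = ∑ p ∈ Finset.range Pn, cc p • y p := by
    calc ∑ j ∈ Finset.range (m+1), a j • vs j
        = ∑ j ∈ Finset.range (m+1), ∑ p ∈ Finset.range Pn, (a j * μ j p) • y p := by
          refine Finset.sum_congr rfl fun j hj => ?_
          rw [← hvj j (Nat.lt_succ_iff.1 (Finset.mem_range.1 hj)), Finset.smul_sum]
          exact Finset.sum_congr rfl fun p _ => by rw [smul_smul]
      _ = ∑ p ∈ Finset.range Pn, ∑ j ∈ Finset.range (m+1), (a j * μ j p) • y p :=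
          Finset.sum_comm
      _ = ∑ p ∈ Finset.range Pn, cc p • y p := by
          refine Finset.sum_congr rfl fun p _ => ?_
          rw [hcc]
          dsimp only
          exact (Finset.sum_smul).symm
  have hccM : ∀ p, |cc p| ≤ M := by
    intro p
    have habel := abel_bound m a (fun j => μ (min j m) p)
      (hμ0 _ _) (by simpa using hμ1 m p)
      (fun j j' hjj' => hμmono p (min j m) (min j' m) (by omega))
      hM0 (fun k hk => hTM k hk)
    have he : ∑ j ∈ Finset.range (m + 1), a j * μ (min j m) p = cc p := by
      rw [hcc]
      dsimp only
      refine Finset.sum_congr rfl fun j hj => ?_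
      rw [min_eq_left (Nat.lt_succ_iff.1 (Finset.mem_range.1 hj))]
    rw [he] at habel
    exact habel
  have hupper1 : ‖∑ j ∈ Finset.range (m+1), a j • vs j‖ ≤ C * M := by
    rw [hident]
    exact hC (Finset.range Pn) cc M hM0 hccM
  have hupper2 : ‖u - ∑ j ∈ Finset.range (m+1), a j • vs j‖ ≤ 2*M*(d/16) := by
    rw [hu_def, ← Finset.sum_sub_distrib]
    calc ‖∑ j ∈ Finset.range (m+1), (a j • ws j - a j • vs j)‖
        ≤ ∑ j ∈ Finset.range (m+1), ‖a j • ws j - a j • vs j‖ := norm_sum_le _ _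
      _ ≤ ∑ j ∈ Finset.range (m+1), 2*M*εf j := by
          refine Finset.sum_le_sum fun j hj => ?_
          have hjm : j ≤ m := Nat.lt_succ_iff.1 (Finset.mem_range.1 hj)
          rw [← smul_sub, norm_smul, Real.norm_eq_abs]
          have hwv : ‖ws j - vs j‖ ≤ εf j := by
            have he : ws j - vs j = ∑ i ∈ Fs j, ls j i • (x i - s i) := by
              rw [hws, hvs]
              dsimp only
              rw [← Finset.sum_sub_distrib]
              exact Finset.sum_congr rfl fun i _ => (smul_sub _ _ _).symm
            rw [he]
            exact P8 j
          exact mul_le_mul (ha j hjm) hwv (norm_nonneg _) (by linarith)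
      _ = 2*M * ∑ j ∈ Finset.range (m+1), εf j := by rw [Finset.mul_sum]
      _ ≤ 2*M*(d/16) := mul_le_mul_of_nonneg_left (hεsum (m+1)) (by linarith)
  have upper : ‖u‖ ≤ (max (max (2/d) (C + d)) 1) * M := by
    have h1 : ‖u‖ ≤ C*M + 2*M*(d/16) := by
      calc ‖u‖ = ‖(u - ∑ j ∈ Finset.range (m+1), a j • vs j)
            + ∑ j ∈ Finset.range (m+1), a j • vs j‖ := by rw [sub_add_cancel]
        _ ≤ ‖u - ∑ j ∈ Finset.range (m+1), a j • vs j‖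
            + ‖∑ j ∈ Finset.range (m+1), a j • vs j‖ := norm_add_le _ _
        _ ≤ 2*M*(d/16) + C*M := add_le_add hupper2 hupper1
        _ = C*M + 2*M*(d/16) := by ring
    have h2 : C*M + 2*M*(d/16) ≤ (C + d)*M := by
      have hdM : 0 ≤ d * M := mul_nonneg hd0.le hM0
      linarith
    have h3 : (C+d)*M ≤ (max (max (2/d) (C + d)) 1)*M :=
      mul_le_mul_of_nonneg_right (le_trans (le_max_right _ _) (le_max_left _ _)) hM0
    linarith
  constructor
  · intro k hk
    have hL2d : 2/d ≤ max (max (2/d) (C+d)) 1 := le_trans (le_max_left _ _) (le_max_left _ _)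
    have h2d : 0 < 2/d := by positivity
    have h1L : 1 / (max (max (2/d) (C+d)) 1) ≤ 1/(2/d) := one_div_le_one_div_of_le h2d hL2d
    have hdd : (1:ℝ)/(2/d) = d/2 := one_div_div _ _
    calc 1 / (max (max (2/d) (C+d)) 1) * |T k| ≤ (d/2) * M := by
          refine mul_le_mul ?_ (hTM k hk) (abs_nonneg _) (by linarith)
          rw [← hdd]
          exact h1L
      _ ≤ ‖u‖ := claim1
  · exact upper

end
end

section
/- Let (y_n) be a sequence in a real Banach space X and let c₂ > 0 be a constant such that ‖∑_{i=1}^m t_i y_i‖ ≤ c₂ max_{1≤i≤m} |t_i| for all m and all scalars t_1, …, t_m. Set z_n = ∑_{i=1}^n y_i, and let (Z_j) be any convex block sequence of (z_n). Then ‖∑_{j=1}^m a_j Z_j‖ ≤ c₂ max_{1≤k≤m} |∑_{j=k}^m a_j| for all m and all scalars a_1, …, a_m; that is, (Z_j) is dominated by the summing basis of c₀. -/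
open Filter Topology

noncomputable section

variable {E : Type*} [NormedAddCommGroup E] [NormedSpace ℝ E]

/-- if the series `∑ yₙ` is WUC with constant `c₂` and
`zₙ = ∑_{i ≤ n} yᵢ`, then every convex block sequence of `z` is dominated by the
summing basis of `c₀` with constant `c₂`. -/
theorem convexBlock_of_partialSums_dominated_by_summingBasis
    {X : Type*} [NormedAddCommGroup X] [NormedSpace ℝ X] [CompleteSpace X]
    (y : ℕ → X) (c₂ : ℝ) (hc₂ : 0 < c₂)
    (hwuc : ∀ m : ℕ, ∀ t : ℕ → ℝ,
      ‖∑ i ∈ Finset.range (m + 1), t i • y i‖ ≤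
        c₂ * (Finset.range (m + 1)).sup' Finset.nonempty_range_add_one (fun i => |t i|))
    (z : ℕ → X) (hz : ∀ n, z n = ∑ i ∈ Finset.range (n + 1), y i)
    (Z : ℕ → X) (hZ : IsConvexBlockSeq Z z) :
    ∀ m : ℕ, ∀ a : ℕ → ℝ,
      ‖∑ j ∈ Finset.range (m + 1), a j • Z j‖ ≤
        c₂ * (Finset.range (m + 1)).sup' Finset.nonempty_range_add_one
          (fun k => |∑ j ∈ Finset.Icc k m, a j|) := by
  obtain ⟨F, lam, hne, hord, hlam0, hlam1, hw⟩ := hZ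
  intro m a
  classical
  set N := (F m).max' (hne m) with hN
  -- ordering between non-adjacent blocks
  have hchain : ∀ j d, ∀ i ∈ F j, ∀ i' ∈ F (j + d + 1), i < i' := by
    intro j d
    induction d with
    | zero => exact hord j
    | succ d ih =>
      intro i hi i' hi'
      obtain ⟨k, hk⟩ := hne (j + d + 1)
      have h1 := ih i hi k hk
      have h2 := hord (j + d + 1) k hk i' (by rw [show j + d + 1 + 1 = j + (d+1) + 1 by ring] ; exact hi')
      omega
  have hle : ∀ j, j ≤ m → ∀ n ∈ F j, n ≤ N := by
    intro j hj n hn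
    rcases eq_or_lt_of_le hj with rfl | hlt
    · exact Finset.le_max' _ _ hn
    · have hm' : j + (m - j - 1) + 1 = m := by omega
      have hmem : N ∈ F (j + (m - j - 1) + 1) := by rw [hm']; exact (F m).max'_mem (hne m)
      have := hchain j (m - j - 1) n hn N hmem
      omega
  set μ : ℕ → ℕ → ℝ := fun j i => ∑ n ∈ (F j).filter (fun n => i ≤ n), lam n with hμ
  have hmu_nonneg : ∀ j i, 0 ≤ μ j i := by
    intro j i; exact Finset.sum_nonneg (fun n _ => hlam0 n)
  have hmu_le_one : ∀ j i, μ j i ≤ 1 := by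
    intro j i
    rw [← hlam1 j]
    exact Finset.sum_le_sum_of_subset_of_nonneg (Finset.filter_subset _ _)
      (fun n _ _ => hlam0 n)
  have hmu_mono : ∀ j i, μ j i ≤ μ (j + 1) i := by
    intro j i
    by_cases h : ∃ n ∈ F j, i ≤ n
    · obtain ⟨n, hn, hin⟩ := h
      have hfull : (F (j+1)).filter (fun n => i ≤ n) = F (j+1) := by
        apply Finset.filter_true_of_mem
        intro n' hn'
        have := hord j n hn n' hn'
        omega
      calc μ j i ≤ 1 := hmu_le_one j i
        _ = μ (j+1) i := by rw [hμ]; simp only []; rw [hfull, hlam1]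
    · have : (F j).filter (fun n => i ≤ n) = ∅ := by
        apply Finset.filter_false_of_mem
        intro n hn hc
        exact h ⟨n, hn, hc⟩
      calc μ j i = 0 := by rw [hμ]; simp only []; rw [this, Finset.sum_empty]
        _ ≤ μ (j+1) i := hmu_nonneg _ _
  -- the key representation
  have key : ∑ j ∈ Finset.range (m + 1), a j • Z j =
      ∑ i ∈ Finset.range (N + 1), (∑ j ∈ Finset.range (m + 1), a j * μ j i) • y i := by
    simp_rw [Finset.sum_smul]
    rw [Finset.sum_comm]
    apply Finset.sum_congr rfl
    intro j hj
    have hjm : j ≤ m := by simpa [Nat.lt_succ_iff] using hj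
    rw [hw j, Finset.smul_sum]
    have step1 : ∀ n ∈ F j, a j • lam n • z n =
        ∑ i ∈ Finset.range (N + 1), (if i ≤ n then a j * lam n else 0) • y i := by
      intro n hn
      have hnN : n ≤ N := hle j hjm n hn
      have hsub : Finset.range (n + 1) = (Finset.range (N + 1)).filter (fun i => i ≤ n) := by
        ext x; simp [Nat.lt_succ_iff]; omega
      rw [hz n, smul_smul, Finset.smul_sum, hsub, Finset.sum_filter]
      apply Finset.sum_congr rfl
      intro i _
      split <;> simp
    rw [Finset.sum_congr rfl step1, Finset.sum_comm]
    apply Finset.sum_congr rfl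
    intro i _
    rw [← Finset.sum_smul]
    congr 1
    rw [hμ]
    simp only []
    rw [Finset.mul_sum, Finset.sum_filter]
  set M : ℝ := (Finset.range (m + 1)).sup' Finset.nonempty_range_add_one
      (fun k => |∑ j ∈ Finset.Icc k m, a j|) with hM
  have hM0 : 0 ≤ M := by
    rw [hM]
    exact le_trans (abs_nonneg _)
      (Finset.le_sup' (fun k => |∑ j ∈ Finset.Icc k m, a j|) (Finset.self_mem_range_succ m))
  -- Abel summation bound on each coefficient
  have habs : ∀ i, |∑ j ∈ Finset.range (m + 1), a j * μ j i| ≤ M := by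
    intro i
    set f : ℕ → ℝ := fun k => if k = 0 then 0 else μ (k - 1) i with hf
    have hfsum : ∀ j, ∑ k ∈ Finset.range (j + 1), (f (k + 1) - f k) = μ j i := by
      intro j
      rw [Finset.sum_range_sub f]
      simp [hf]
    have hdnn : ∀ k, 0 ≤ f (k + 1) - f k := by
      intro k
      cases k with
      | zero => simpa [hf] using hmu_nonneg 0 i
      | succ s =>
        have := hmu_mono s i
        simp only [hf]
        norm_num
        exact this
    have habel : ∑ j ∈ Finset.range (m + 1), a j * μ j i =
        ∑ k ∈ Finset.range (m + 1), (f (k + 1) - f k) * ∑ j ∈ Finset.Icc k m, a j := by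
      have h1 : ∀ k ∈ Finset.range (m + 1),
          (f (k + 1) - f k) * ∑ j ∈ Finset.Icc k m, a j =
          ∑ j ∈ Finset.range (m + 1), if k ≤ j then (f (k + 1) - f k) * a j else 0 := by
        intro k _
        rw [Finset.mul_sum,
          show Finset.Icc k m = (Finset.range (m + 1)).filter (fun j => k ≤ j) by
            ext x; simp [Nat.lt_succ_iff]; omega,
          Finset.sum_filter]
      rw [Finset.sum_congr rfl h1, Finset.sum_comm]
      apply Finset.sum_congr rfl
      intro j hj
      have hjm : j ≤ m := by simpa [Nat.lt_succ_iff] using hj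
      have h2 : Finset.range (j + 1) = (Finset.range (m + 1)).filter (fun k => k ≤ j) := by
        ext x; simp [Nat.lt_succ_iff]; omega
      calc a j * μ j i = (∑ k ∈ Finset.range (j + 1), (f (k + 1) - f k)) * a j := by
            rw [hfsum j, mul_comm]
        _ = ∑ k ∈ Finset.range (m + 1), if k ≤ j then (f (k + 1) - f k) * a j else 0 := by
            rw [Finset.sum_mul, h2, Finset.sum_filter]
    rw [habel]
    calc |∑ k ∈ Finset.range (m + 1), (f (k + 1) - f k) * ∑ j ∈ Finset.Icc k m, a j|
        ≤ ∑ k ∈ Finset.range (m + 1), |(f (k + 1) - f k) * ∑ j ∈ Finset.Icc k m, a j| :=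
          Finset.abs_sum_le_sum_abs _ _
      _ = ∑ k ∈ Finset.range (m + 1), (f (k + 1) - f k) * |∑ j ∈ Finset.Icc k m, a j| := by
          apply Finset.sum_congr rfl
          intro k _
          rw [abs_mul, abs_of_nonneg (hdnn k)]
      _ ≤ ∑ k ∈ Finset.range (m + 1), (f (k + 1) - f k) * M := by
          apply Finset.sum_le_sum
          intro k hk
          have hkM : |∑ j ∈ Finset.Icc k m, a j| ≤ M := by
            rw [hM]
            exact Finset.le_sup' (fun k => |∑ j ∈ Finset.Icc k m, a j|) hk
          exact mul_le_mul_of_nonneg_left hkM (hdnn k)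
      _ = μ m i * M := by rw [← Finset.sum_mul, hfsum m]
      _ ≤ 1 * M := mul_le_mul_of_nonneg_right (hmu_le_one m i) hM0
      _ = M := one_mul M
  calc ‖∑ j ∈ Finset.range (m + 1), a j • Z j‖
      = ‖∑ i ∈ Finset.range (N + 1), (∑ j ∈ Finset.range (m + 1), a j * μ j i) • y i‖ := by
        rw [key]
    _ ≤ c₂ * (Finset.range (N + 1)).sup' Finset.nonempty_range_add_one
          (fun i => |∑ j ∈ Finset.range (m + 1), a j * μ j i|) :=
        hwuc N _
    _ ≤ c₂ * M := by
        apply mul_le_mul_of_nonneg_left _ hc₂.le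
        exact Finset.sup'_le _ _ (fun i _ => habs i)

end
end

section
/- Every real Banach space with Pełczyński's property (u) has property (su). -/
open Filter Topology

noncomputable section

variable {E : Type*} [NormedAddCommGroup E] [NormedSpace ℝ E]

section AuxSU
open NormedSpace
variable {X : Type*} [NormedAddCommGroup X] [NormedSpace ℝ X]


lemma weakCauchy_bounded (x : ℕ → X) (hx : WeakCauchySeq x) :
    ∃ R : ℝ, 0 ≤ R ∧ ∀ n, ‖x n‖ ≤ R := by
  have h : ∀ f : StrongDual ℝ X, ∃ C, ∀ n, ‖(inclusionInDoubleDual ℝ X (x n)) f‖ ≤ C := by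
    intro f
    obtain ⟨l, hl⟩ := hx f
    obtain ⟨C, hC⟩ := hl.norm.bddAbove_range
    exact ⟨C, fun n => hC ⟨n, rfl⟩⟩
  obtain ⟨C', hC'⟩ := banach_steinhaus h
  refine ⟨max C' 0, le_max_right _ _, fun n => ?_⟩
  have : ‖inclusionInDoubleDual ℝ X (x n)‖ = ‖x n‖ :=
    (inclusionInDoubleDualLi ℝ (E := X)).norm_map (x n)
  rw [← this]
  exact le_trans (hC' n) (le_max_left _ _)

lemma wuc_bound (y : ℕ → X) (hy : ∀ f : StrongDual ℝ X, Summable fun n => |f (y n)|) :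
    ∃ C : ℝ, 0 < C ∧ ∀ (m : ℕ) (b : ℕ → ℝ) (B : ℝ), 0 ≤ B → (∀ i < m, |b i| ≤ B) →
      ‖∑ i ∈ Finset.range m, b i • y i‖ ≤ C * B := by
  set v : ℕ × (ℕ → Bool) → X := fun p =>
    ∑ i ∈ Finset.range p.1, (if p.2 i then (1:ℝ) else -1) • y i with hv
  have h : ∀ f : StrongDual ℝ X, ∃ C, ∀ p, ‖(inclusionInDoubleDual ℝ X (v p)) f‖ ≤ C := by
    intro f
    refine ⟨∑' n, |f (y n)|, fun p => ?_⟩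
    have : f (v p) = ∑ i ∈ Finset.range p.1, (if p.2 i then (1:ℝ) else -1) * f (y i) := by
      rw [hv, map_sum]
      refine Finset.sum_congr rfl fun i _ => ?_
      rw [map_smul, smul_eq_mul]
    rw [show ‖((inclusionInDoubleDual ℝ X) (v p)) f‖ = |f (v p)| from rfl, this]
    calc |∑ i ∈ Finset.range p.1, (if p.2 i then (1:ℝ) else -1) * f (y i)|
        ≤ ∑ i ∈ Finset.range p.1, |(if p.2 i then (1:ℝ) else -1) * f (y i)| :=
          Finset.abs_sum_le_sum_abs _ _
      _ ≤ ∑ i ∈ Finset.range p.1, |f (y i)| := by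
          refine Finset.sum_le_sum fun i _ => ?_
          rw [abs_mul]
          split <;> simp
      _ ≤ ∑' n, |f (y n)| :=
          Summable.sum_le_tsum _ (fun i _ => abs_nonneg _) (hy f)
  obtain ⟨C', hC'⟩ := banach_steinhaus h
  have hvC : ∀ p, ‖v p‖ ≤ C' := by
    intro p
    have : ‖inclusionInDoubleDual ℝ X (v p)‖ = ‖v p‖ :=
      (inclusionInDoubleDualLi ℝ (E := X)).norm_map (v p)
    rw [← this]; exact hC' p
  have key : ∀ (f : StrongDual ℝ X) (m : ℕ), ∑ i ∈ Finset.range m, |f (y i)| ≤ C' * ‖f‖ := by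
    intro f m
    set ε : ℕ → Bool := fun i => decide (0 ≤ f (y i)) with hε
    have : f (v (m, ε)) = ∑ i ∈ Finset.range m, |f (y i)| := by
      rw [hv, map_sum]
      refine Finset.sum_congr rfl fun i _ => ?_
      rw [map_smul, smul_eq_mul]
      by_cases h0 : 0 ≤ f (y i)
      · simp [hε, h0, abs_of_nonneg h0]
      · simp only [hε, h0, decide_eq_true_eq, if_false]
        rw [abs_of_neg (lt_of_not_ge h0)]; ring
    rw [← this]
    calc f (v (m, ε)) ≤ ‖f (v (m, ε))‖ := le_abs_self _
      _ ≤ ‖f‖ * ‖v (m, ε)‖ := f.le_opNorm _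
      _ ≤ ‖f‖ * C' := by
          refine mul_le_mul_of_nonneg_left (hvC _) (norm_nonneg _)
      _ = C' * ‖f‖ := mul_comm _ _
  refine ⟨max C' 1, lt_of_lt_of_le one_pos (le_max_right _ _), fun m b B hB hbB => ?_⟩
  have := norm_le_dual_bound ℝ (∑ i ∈ Finset.range m, b i • y i) (M := max C' 1 * B)
    (mul_nonneg (le_trans zero_le_one (le_max_right _ _)) hB) ?_
  · exact this
  intro f
  have h1 : f (∑ i ∈ Finset.range m, b i • y i) = ∑ i ∈ Finset.range m, b i * f (y i) := by
    simp [map_sum]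
  rw [show ‖f (∑ i ∈ Finset.range m, b i • y i)‖ = |f (∑ i ∈ Finset.range m, b i • y i)| from rfl, h1]
  calc |∑ i ∈ Finset.range m, b i * f (y i)|
      ≤ ∑ i ∈ Finset.range m, |b i| * |f (y i)| := by
        refine le_trans (Finset.abs_sum_le_sum_abs _ _) ?_
        refine le_of_eq (Finset.sum_congr rfl fun i _ => abs_mul _ _)
    _ ≤ ∑ i ∈ Finset.range m, B * |f (y i)| := by
        refine Finset.sum_le_sum fun i hi => ?_
        exact mul_le_mul_of_nonneg_right (hbB i (Finset.mem_range.1 hi)) (abs_nonneg _)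
    _ = B * ∑ i ∈ Finset.range m, |f (y i)| := by rw [Finset.mul_sum]
    _ ≤ B * (C' * ‖f‖) := mul_le_mul_of_nonneg_left (key f m) hB
    _ ≤ max C' 1 * B * ‖f‖ := by
        rw [show B * (C' * ‖f‖) = C' * B * ‖f‖ by ring]
        exact mul_le_mul_of_nonneg_right
          (mul_le_mul_of_nonneg_right (le_max_left _ _) hB) (norm_nonneg _)

lemma helly_sep (z : StrongDual ℝ (StrongDual ℝ X)) {d : ℝ} (hd : 0 < d)
    (hz : ∀ v : X, d ≤ ‖z - inclusionInDoubleDual ℝ X v‖) (s : ℕ → X) (G : Finset ℕ) :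
    ∃ f : StrongDual ℝ X, ‖f‖ ≤ 2 / d ∧ (∀ i ∈ G, f (s i) = 0) ∧ z f = 1 := by
  classical
  have main : ∃ f : StrongDual ℝ X, ‖f‖ ≤ 1 ∧ (∀ i ∈ G, f (s i) = 0) ∧ d / 2 < z f := by
    by_contra hcon
    push_neg at hcon
    have habs : ∀ f : StrongDual ℝ X, (∀ i ∈ G, f (s i) = 0) → |z f| ≤ d / 2 * ‖f‖ := by
      intro f hf
      rcases eq_or_ne f 0 with rfl | hne
      · simp
      have hnf : 0 < ‖f‖ := norm_pos_iff.2 hne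
      have h1 : ∀ g : StrongDual ℝ X, ‖g‖ ≤ 1 → (∀ i ∈ G, g (s i) = 0) → z g ≤ d / 2 :=
        fun g h1 h2 => hcon g h1 h2
      have hzf : z (‖f‖⁻¹ • f) ≤ d / 2 := by
        refine h1 _ ?_ fun i hi => by simp [hf i hi]
        rw [norm_smul, norm_inv, norm_norm, inv_mul_cancel₀ (ne_of_gt hnf)]
      have hzf' : z (-(‖f‖⁻¹ • f)) ≤ d / 2 := by
        refine h1 _ ?_ fun i hi => by simp [hf i hi]
        rw [norm_neg, norm_smul, norm_inv, norm_norm, inv_mul_cancel₀ (ne_of_gt hnf)]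
      rw [map_neg] at hzf'
      have : |z (‖f‖⁻¹ • f)| ≤ d / 2 := abs_le.2 ⟨by linarith, hzf⟩
      rw [map_smul, smul_eq_mul, abs_mul, abs_inv, abs_norm] at this
      calc |z f| = ‖f‖ * (‖f‖⁻¹ * |z f|) := by field_simp
        _ ≤ ‖f‖ * (d / 2) := mul_le_mul_of_nonneg_left this (norm_nonneg f)
        _ = d / 2 * ‖f‖ := mul_comm _ _
    -- K = common kernel
    set K : Submodule ℝ (StrongDual ℝ X) :=
      ⨅ i ∈ G, LinearMap.ker ((inclusionInDoubleDual ℝ X (s i)) : StrongDual ℝ X →ₗ[ℝ] ℝ) with hK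
    have hmemK : ∀ f : StrongDual ℝ X, f ∈ K ↔ ∀ i ∈ G, f (s i) = 0 := by
      intro f
      simp [hK, Submodule.mem_iInf, LinearMap.mem_ker]
    -- Hahn-Banach extension of z restricted to K
    obtain ⟨g, hg1, hg2⟩ := exists_extension_norm_eq K (z.comp K.subtypeL)
    have hgle : ‖g‖ ≤ d / 2 := by
      rw [hg2]
      refine ContinuousLinearMap.opNorm_le_bound _ (le_of_lt (half_pos hd)) fun f => ?_
      have := habs f.val ((hmemK f.val).1 f.2)
      simpa using this
    set h : StrongDual ℝ (StrongDual ℝ X) := z - g with hh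
    have hker : ∀ f ∈ K, h f = 0 := by
      intro f hf
      have h6 : g f = z f := (hg1 ⟨f, hf⟩).trans rfl
      simp only [hh, ContinuousLinearMap.sub_apply]
      rw [h6, sub_self]
    -- linear algebra: h is in the span of evaluations
    set L : G → (StrongDual ℝ X →ₗ[ℝ] ℝ) := fun i => (inclusionInDoubleDual ℝ X (s i.val)) with hL
    have hinf : (⨅ i : G, LinearMap.ker (L i)) ≤ LinearMap.ker (h : StrongDual ℝ X →ₗ[ℝ] ℝ) := by
      intro f hf
      simp only [Submodule.mem_iInf] at hf
      rw [LinearMap.mem_ker]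
      refine hker f ((hmemK f).2 fun i hi => ?_)
      have := hf ⟨i, hi⟩
      rw [LinearMap.mem_ker] at this
      exact this
    have hspan := mem_span_of_iInf_ker_le_ker hinf
    obtain ⟨c, hc⟩ := (Submodule.mem_span_range_iff_exists_fun ℝ).1 hspan
    set v : X := ∑ i : G, c i • s i.val with hv'
    have heq : z - inclusionInDoubleDual ℝ X v = g := by
      ext f
      have hcf := congrArg (fun (φ : StrongDual ℝ X →ₗ[ℝ] ℝ) => φ f) hc
      simp only [LinearMap.coe_sum, Finset.sum_apply, LinearMap.smul_apply,
        smul_eq_mul] at hcf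
      have h2 : f v = ∑ i : G, c i * f (s i.val) := by
        rw [hv', map_sum]
        exact Finset.sum_congr rfl fun i _ => by rw [map_smul, smul_eq_mul]
      have h4 : inclusionInDoubleDual ℝ X v f = f v := rfl
      have h5 : ∑ i : G, c i * f (s i.val) = h f := hcf
      have h6 : h f = z f - g f := rfl
      simp only [ContinuousLinearMap.sub_apply, h4, h2, h5, h6]
      ring
    have := hz v
    rw [heq] at this
    linarith [lt_of_le_of_lt (le_trans this hgle) (half_lt_self hd)]
  obtain ⟨f, hf1, hf2, hf3⟩ := main
  have hzf : 0 < z f := lt_trans (half_pos hd) hf3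
  refine ⟨(z f)⁻¹ • f, ?_, fun i hi => by simp [hf2 i hi], by
    rw [map_smul, smul_eq_mul, inv_mul_cancel₀ (ne_of_gt hzf)]⟩
  rw [norm_smul, norm_inv, Real.norm_eq_abs, abs_of_pos hzf]
  calc (z f)⁻¹ * ‖f‖ ≤ (z f)⁻¹ * 1 := by
        exact mul_le_mul_of_nonneg_left hf1 (le_of_lt (inv_pos.2 hzf))
    _ = (z f)⁻¹ := mul_one _
    _ ≤ 2 / d := by
        rw [show (2 : ℝ) / d = (d / 2)⁻¹ by rw [inv_div]]
        exact inv_anti₀ (half_pos hd) (le_of_lt hf3)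

lemma exists_sep_functionals [CompleteSpace X] (s : ℕ → X) (hs : WeakCauchySeq s)
    (hnw : ¬ ∃ w : X, ∀ f : StrongDual ℝ X, Tendsto (fun n => f (s n)) atTop (𝓝 (f w))) :
    ∃ M : ℝ, 0 < M ∧ ∀ G : Finset ℕ, ∃ f : StrongDual ℝ X, ‖f‖ ≤ M ∧ (∀ i ∈ G, f (s i) = 0) ∧
      Tendsto (fun j => f (s j)) atTop (𝓝 1) := by
  classical
  obtain ⟨R, hR0, hR⟩ := weakCauchy_bounded s hs
  set l : StrongDual ℝ X → ℝ := fun f => (hs f).choose with hl'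
  have hl : ∀ f, Tendsto (fun n => f (s n)) atTop (𝓝 (l f)) := fun f => (hs f).choose_spec
  set zlin : StrongDual ℝ X →ₗ[ℝ] ℝ :=
    { toFun := l
      map_add' := by
        intro f g
        refine tendsto_nhds_unique (hl (f + g)) ?_
        have := (hl f).add (hl g)
        simpa using this
      map_smul' := by
        intro c f
        refine tendsto_nhds_unique (hl (c • f)) ?_
        have := (hl f).const_mul c
        simpa using this } with hzlin
  have hbz : ∀ f : StrongDual ℝ X, ‖zlin f‖ ≤ R * ‖f‖ := by
    intro f
    have h1 : Tendsto (fun n => ‖f (s n)‖) atTop (𝓝 ‖l f‖) := (hl f).norm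
    refine le_of_tendsto h1 (Eventually.of_forall fun n => ?_)
    calc ‖f (s n)‖ ≤ ‖f‖ * ‖s n‖ := f.le_opNorm _
      _ ≤ ‖f‖ * R := mul_le_mul_of_nonneg_left (hR n) (norm_nonneg _)
      _ = R * ‖f‖ := mul_comm _ _
  set z : StrongDual ℝ (StrongDual ℝ X) := zlin.mkContinuous R hbz with hz'
  have hzf : ∀ f, z f = l f := fun f => rfl
  have hznotin : z ∉ Set.range (inclusionInDoubleDual ℝ X) := by
    rintro ⟨v, hv⟩
    refine hnw ⟨v, fun f => ?_⟩
    have : f v = z f := by rw [← hv]; rfl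
    rw [this]
    exact hl f
  have hclosed : IsClosed (Set.range (inclusionInDoubleDual ℝ X)) := by
    have h2 : Isometry (inclusionInDoubleDual ℝ X) :=
      (inclusionInDoubleDualLi ℝ (E := X)).isometry
    exact h2.isClosedEmbedding.isClosed_range
  have hne : (Set.range (inclusionInDoubleDual ℝ X)).Nonempty := ⟨_, ⟨0, rfl⟩⟩
  have hd : 0 < Metric.infDist z (Set.range (inclusionInDoubleDual ℝ X)) :=
    (hclosed.notMem_iff_infDist_pos hne).1 hznotin
  set d := Metric.infDist z (Set.range (inclusionInDoubleDual ℝ X)) with hd'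
  have hdist : ∀ v : X, d ≤ ‖z - inclusionInDoubleDual ℝ X v‖ := by
    intro v
    exact le_of_le_of_eq (Metric.infDist_le_dist_of_mem ⟨v, rfl⟩) (dist_eq_norm z (inclusionInDoubleDual ℝ X v))
  refine ⟨2 / d, by positivity, fun G => ?_⟩
  obtain ⟨f, hf1, hf2, hf3⟩ := helly_sep z hd hdist s G
  refine ⟨f, hf1, hf2, ?_⟩
  have := hl f
  rw [← hzf, hf3] at this
  exact this

lemma extraction (s : ℕ → X) (M : ℝ)
    (hsep : ∀ G : Finset ℕ, ∃ f : StrongDual ℝ X, ‖f‖ ≤ M ∧ (∀ i ∈ G, f (s i) = 0) ∧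
      Tendsto (fun j => f (s j)) atTop (𝓝 1)) :
    ∃ (ψ : ℕ → ℕ) (g : ℕ → StrongDual ℝ X), StrictMono ψ ∧ (∀ k, ‖g k‖ ≤ M) ∧
      (∀ k i, i < k → g k (s (ψ i)) = 0) ∧
      (∀ k i, k ≤ i → |g k (s (ψ i)) - 1| ≤ (2⁻¹ : ℝ) ^ (i + 4)) := by
  classical
  set fG : Finset ℕ → StrongDual ℝ X := fun G => (hsep G).choose with hfG'
  have hfG : ∀ G : Finset ℕ, ‖fG G‖ ≤ M ∧ (∀ i ∈ G, fG G (s i) = 0) ∧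
      Tendsto (fun j => fG G (s j)) atTop (𝓝 1) := fun G => (hsep G).choose_spec
  have hnext : ∀ G : Finset ℕ, ∃ m : ℕ, (∀ i ∈ G, i < m) ∧
      ∀ J ∈ G.powerset, |fG J (s m) - 1| ≤ (2⁻¹ : ℝ) ^ (G.card + 4) := by
    intro G
    have hε : (0 : ℝ) < (2⁻¹ : ℝ) ^ (G.card + 4) := by positivity
    have h3 : ∀ J ∈ G.powerset, ∀ᶠ m in atTop, |fG J (s m) - 1| ≤ (2⁻¹ : ℝ) ^ (G.card + 4) := by
      intro J _
      have := (hfG J).2.2.eventually (Metric.closedBall_mem_nhds (1 : ℝ) hε)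
      refine this.mono fun m hm => ?_
      rw [Real.dist_eq] at hm
      exact hm
    have h4 : ∀ᶠ m in atTop, ∀ i ∈ G, i < m := by
      filter_upwards [eventually_gt_atTop (G.sup id)] with m hm i hi
      exact lt_of_le_of_lt (Finset.le_sup (f := id) hi) hm
    exact (h4.and ((eventually_all_finset _).2 h3)).exists
  choose next hnext1 hnext2 using hnext
  set st : ℕ → Finset ℕ := fun k => Nat.rec ∅ (fun _ G => insert (next G) G) k with hst'
  have hstsucc : ∀ k, st (k + 1) = insert (next (st k)) (st k) := fun k => rfl
  set ψ : ℕ → ℕ := fun k => next (st k) with hψ'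
  set g : ℕ → StrongDual ℝ X := fun k => fG (st k) with hg'
  have hstim : ∀ k, st k = Finset.image ψ (Finset.range k) := by
    intro k
    induction k with
    | zero => rfl
    | succ k ih => rw [hstsucc, ih, Finset.range_add_one, Finset.image_insert, ← ih]
  have hψmono : StrictMono ψ := by
    refine strictMono_nat_of_lt_succ fun k => ?_
    refine hnext1 (st (k + 1)) (ψ k) ?_
    rw [hstsucc]
    exact Finset.mem_insert_self _ _
  have hstmono : ∀ k i, k ≤ i → st k ⊆ st i := by
    intro k i hki
    rw [hstim, hstim]
    exact Finset.image_subset_image (Finset.range_subset_range.2 hki)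
  have hcard : ∀ k, (st k).card = k := by
    intro k
    induction k with
    | zero => rfl
    | succ k ih =>
      rw [hstsucc, Finset.card_insert_of_notMem, ih]
      intro hmem
      exact lt_irrefl _ (hnext1 (st k) _ hmem)
  refine ⟨ψ, g, hψmono, fun k => (hfG (st k)).1, ?_, ?_⟩
  · intro k i hik
    refine (hfG (st k)).2.1 _ ?_
    rw [hstim]
    exact Finset.mem_image_of_mem ψ (Finset.mem_range.2 hik)
  · intro k i hki
    have := hnext2 (st i) (st k) (Finset.mem_powerset.2 (hstmono k i hki))
    rw [hcard] at this
    exact this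

lemma tail_nonneg_sup (m : ℕ) (b : ℕ → ℝ) :
    0 ≤ (Finset.range (m+1)).sup' Finset.nonempty_range_add_one
      (fun k => |∑ i ∈ Finset.Icc k m, b i|) :=
  le_trans (abs_nonneg _) (Finset.le_sup' (f := fun k => |∑ i ∈ Finset.Icc k m, b i|)
    (Finset.self_mem_range_succ m))

lemma tail_abs_le_sup (m : ℕ) (b : ℕ → ℝ) {k : ℕ} (hk : k ≤ m) :
    |∑ i ∈ Finset.Icc k m, b i| ≤ (Finset.range (m+1)).sup' Finset.nonempty_range_add_one
      (fun k => |∑ i ∈ Finset.Icc k m, b i|) :=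
  Finset.le_sup' (f := fun k => |∑ i ∈ Finset.Icc k m, b i|) (Finset.mem_range_succ_iff.2 hk)

lemma coef_abs_le (m : ℕ) (b : ℕ → ℝ) {i : ℕ} (hi : i ≤ m) :
    |b i| ≤ 2 * (Finset.range (m+1)).sup' Finset.nonempty_range_add_one
      (fun k => |∑ i ∈ Finset.Icc k m, b i|) := by
  set Tm := (Finset.range (m+1)).sup' Finset.nonempty_range_add_one
      (fun k => |∑ i ∈ Finset.Icc k m, b i|) with hTm
  have hsplit : ∑ j ∈ Finset.Icc i m, b j = b i + ∑ j ∈ Finset.Icc (i+1) m, b j := by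
    rw [← Finset.Ico_add_one_right_eq_Icc, ← Finset.Ico_add_one_right_eq_Icc]
    exact Finset.sum_eq_sum_Ico_succ_bot (Nat.lt_succ_of_le hi) _
  have h1 : |∑ j ∈ Finset.Icc i m, b j| ≤ Tm := tail_abs_le_sup m b hi
  have h2 : |∑ j ∈ Finset.Icc (i+1) m, b j| ≤ Tm := by
    rcases lt_or_eq_of_le hi with h | h
    · exact tail_abs_le_sup m b h
    · rw [h, Finset.Icc_eq_empty (by omega), Finset.sum_empty, abs_zero]
      exact tail_nonneg_sup m b
  calc |b i| = |∑ j ∈ Finset.Icc i m, b j - ∑ j ∈ Finset.Icc (i+1) m, b j| := by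
        rw [hsplit]; ring_nf
    _ ≤ |∑ j ∈ Finset.Icc i m, b j| + |∑ j ∈ Finset.Icc (i+1) m, b j| := abs_sub _ _
    _ ≤ 2 * Tm := by linarith

lemma lb_estimate (t : ℕ → X) (g : ℕ → StrongDual ℝ X) (M : ℝ) (hM : 0 < M)
    (hgM : ∀ k, ‖g k‖ ≤ M) (hg0 : ∀ k i, i < k → g k (t i) = 0)
    (hg1 : ∀ k i, k ≤ i → |g k (t i) - 1| ≤ (2⁻¹ : ℝ) ^ (i + 4)) (m : ℕ) (b : ℕ → ℝ) :
    (Finset.range (m+1)).sup' Finset.nonempty_range_add_one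
        (fun k => |∑ i ∈ Finset.Icc k m, b i|)
      ≤ 2 * M * ‖∑ i ∈ Finset.range (m+1), b i • t i‖ := by
  set W := ∑ i ∈ Finset.range (m+1), b i • t i with hW
  set Tm := (Finset.range (m+1)).sup' Finset.nonempty_range_add_one
      (fun k => |∑ i ∈ Finset.Icc k m, b i|) with hTm
  have hTm0 : 0 ≤ Tm := tail_nonneg_sup m b
  have hgeom : ∀ k : ℕ, ∑ i ∈ Finset.Icc k m, (2⁻¹ : ℝ) ^ (i + 4) ≤ 8⁻¹ := by
    intro k
    calc ∑ i ∈ Finset.Icc k m, (2⁻¹ : ℝ) ^ (i + 4)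
        ≤ ∑ i ∈ Finset.range (m+1), (2⁻¹ : ℝ) ^ (i + 4) := by
          refine Finset.sum_le_sum_of_subset_of_nonneg ?_ (fun i _ _ => by positivity)
          intro i hi
          rw [Finset.mem_Icc] at hi
          exact Finset.mem_range_succ_iff.2 hi.2
      _ = (2⁻¹ : ℝ) ^ 4 * ∑ i ∈ Finset.range (m+1), (2⁻¹ : ℝ) ^ i := by
          rw [Finset.mul_sum]
          exact Finset.sum_congr rfl fun i _ => by rw [← pow_add]; ring_nf
      _ ≤ (2⁻¹ : ℝ) ^ 4 * 2 := by
          refine mul_le_mul_of_nonneg_left ?_ (by positivity)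
          have := sum_geometric_two_le (m+1)
          simpa [one_div] using this
      _ = 8⁻¹ := by norm_num
  have stepA : ∀ k ≤ m, |∑ i ∈ Finset.Icc k m, b i| ≤ M * ‖W‖ + Tm / 4 := by
    intro k hk
    have hgW : g k W = ∑ i ∈ Finset.Icc k m, b i * g k (t i) := by
      rw [hW, map_sum]
      have : ∀ i, g k (b i • t i) = b i * g k (t i) := fun i => by
        rw [map_smul, smul_eq_mul]
      rw [Finset.sum_congr rfl fun i _ => this i]
      rw [Finset.range_eq_Ico, ← Finset.sum_Ico_consecutive _ (Nat.zero_le k)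
        (by omega : k ≤ m + 1), ← Finset.Ico_add_one_right_eq_Icc]
      have hzero : ∑ i ∈ Finset.Ico 0 k, b i * g k (t i) = 0 := by
        refine Finset.sum_eq_zero fun i hi => ?_
        rw [Finset.mem_Ico] at hi
        rw [hg0 k i hi.2, mul_zero]
      rw [hzero, zero_add]
    have key : ∑ i ∈ Finset.Icc k m, b i = g k W - ∑ i ∈ Finset.Icc k m, b i * (g k (t i) - 1) := by
      rw [hgW, ← Finset.sum_sub_distrib]
      exact (Finset.sum_congr rfl fun i _ => by ring).symm
    rw [key]
    have herr : |∑ i ∈ Finset.Icc k m, b i * (g k (t i) - 1)| ≤ Tm / 4 := by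
      calc |∑ i ∈ Finset.Icc k m, b i * (g k (t i) - 1)|
          ≤ ∑ i ∈ Finset.Icc k m, |b i| * |g k (t i) - 1| := by
            refine le_trans (Finset.abs_sum_le_sum_abs _ _) ?_
            exact le_of_eq (Finset.sum_congr rfl fun i _ => abs_mul _ _)
        _ ≤ ∑ i ∈ Finset.Icc k m, (2 * Tm) * ((2⁻¹ : ℝ) ^ (i + 4)) := by
            refine Finset.sum_le_sum fun i hi => ?_
            rw [Finset.mem_Icc] at hi
            exact mul_le_mul (coef_abs_le m b hi.2) (hg1 k i hi.1) (abs_nonneg _)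
              (by linarith)
        _ = (2 * Tm) * ∑ i ∈ Finset.Icc k m, (2⁻¹ : ℝ) ^ (i + 4) := by
            rw [Finset.mul_sum]
        _ ≤ (2 * Tm) * 8⁻¹ := mul_le_mul_of_nonneg_left (hgeom k) (by linarith)
        _ = Tm / 4 := by ring
    have hgWb : |g k W| ≤ M * ‖W‖ := by
      calc |g k W| = ‖g k W‖ := rfl
        _ ≤ ‖g k‖ * ‖W‖ := (g k).le_opNorm _
        _ ≤ M * ‖W‖ := mul_le_mul_of_nonneg_right (hgM k) (norm_nonneg _)
    calc |g k W - ∑ i ∈ Finset.Icc k m, b i * (g k (t i) - 1)|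
        ≤ |g k W| + |∑ i ∈ Finset.Icc k m, b i * (g k (t i) - 1)| := abs_sub _ _
      _ ≤ M * ‖W‖ + Tm / 4 := add_le_add hgWb herr
  obtain ⟨k₀, hk₀, hk₀eq⟩ := Finset.exists_mem_eq_sup' Finset.nonempty_range_add_one
    (fun k => |∑ i ∈ Finset.Icc k m, b i|)
  have h1 : Tm ≤ M * ‖W‖ + Tm / 4 := by
    have h3 := stepA k₀ (Finset.mem_range_succ_iff.1 hk₀)
    rw [← hk₀eq] at h3
    exact h3
  have hMW : 0 ≤ M * ‖W‖ := mul_nonneg (le_of_lt hM) (norm_nonneg _)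
  nlinarith [norm_nonneg W]

lemma ub_estimate (y : ℕ → X) (C : ℝ)
    (hC : ∀ (m : ℕ) (b : ℕ → ℝ) (B : ℝ), 0 ≤ B → (∀ i < m, |b i| ≤ B) →
      ‖∑ i ∈ Finset.range m, b i • y i‖ ≤ C * B)
    (ψ : ℕ → ℕ) (hψ : Monotone ψ) (m : ℕ) (b : ℕ → ℝ) :
    ‖∑ i ∈ Finset.range (m+1), b i • (∑ j ∈ Finset.range (ψ i + 1), y j)‖
      ≤ C * (Finset.range (m+1)).sup' Finset.nonempty_range_add_one
          (fun k => |∑ i ∈ Finset.Icc k m, b i|) := by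
  classical
  set Tm := (Finset.range (m+1)).sup' Finset.nonempty_range_add_one
      (fun k => |∑ i ∈ Finset.Icc k m, b i|) with hTm
  set β : ℕ → ℝ := fun j => ∑ i ∈ (Finset.range (m+1)).filter (fun i => j ≤ ψ i), b i with hβ
  have hswap : ∑ i ∈ Finset.range (m+1), b i • (∑ j ∈ Finset.range (ψ i + 1), y j)
      = ∑ j ∈ Finset.range (ψ m + 1), β j • y j := by
    have h1 : ∀ i, b i • (∑ j ∈ Finset.range (ψ i + 1), y j)
        = ∑ j ∈ Finset.range (ψ i + 1), b i • y j := fun i => Finset.smul_sum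
    rw [Finset.sum_congr rfl fun i _ => h1 i]
    rw [Finset.sum_comm' (t' := Finset.range (ψ m + 1))
      (s' := fun j => (Finset.range (m+1)).filter (fun i => j ≤ ψ i))]
    · refine Finset.sum_congr rfl fun j _ => ?_
      rw [hβ, Finset.sum_smul]
    · intro i j
      simp only [Finset.mem_range, Finset.mem_filter]
      constructor
      · rintro ⟨h1', h2'⟩
        have h3' := hψ (Nat.lt_succ_iff.1 h1')
        exact ⟨⟨h1', by omega⟩, by omega⟩
      · rintro ⟨⟨h1', h2'⟩, h3'⟩
        exact ⟨h1', by omega⟩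
  rw [hswap]
  refine hC (ψ m + 1) β Tm (tail_nonneg_sup m b) ?_
  intro j hj
  have hne : ((Finset.range (m+1)).filter (fun i => j ≤ ψ i)).Nonempty := by
    refine ⟨m, ?_⟩
    rw [Finset.mem_filter, Finset.mem_range]
    exact ⟨by omega, by omega⟩
  · set F := (Finset.range (m+1)).filter (fun i => j ≤ ψ i) with hF
    set k := F.min' hne with hk
    have hkF : k ∈ F := F.min'_mem hne
    have hkm : k ≤ m ∧ j ≤ ψ k := by
      have := hkF
      rw [hF, Finset.mem_filter, Finset.mem_range] at this
      exact ⟨by omega, this.2⟩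
    have hFeq : F = Finset.Icc k m := by
      ext i
      rw [hF, Finset.mem_filter, Finset.mem_range, Finset.mem_Icc]
      constructor
      · rintro ⟨h1', h2'⟩
        exact ⟨F.min'_le i (by rw [hF, Finset.mem_filter, Finset.mem_range]; exact ⟨h1', h2'⟩),
          by omega⟩
      · rintro ⟨h1', h2'⟩
        exact ⟨by omega, le_trans hkm.2 (hψ h1')⟩
    have : β j = ∑ i ∈ Finset.Icc k m, b i := by rw [hβ]; rw [← hFeq]
    rw [this]
    exact tail_abs_le_sup m b hkm.1


lemma blocks_ordered (F : ℕ → Finset ℕ) (hne : ∀ j, (F j).Nonempty)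
    (hadj : ∀ j, ∀ i ∈ F j, ∀ i' ∈ F (j + 1), i < i') :
    ∀ j j', j < j' → ∀ i ∈ F j, ∀ i' ∈ F j', i < i' := by
  intro j j' hjj'
  induction j' with
  | zero => omega
  | succ j' ih =>
    intro i hi i' hi'
    rcases Nat.lt_succ_iff_lt_or_eq.1 hjj' with h | h
    · obtain ⟨i'', hi''⟩ := hne j'
      exact lt_trans (ih h i hi i'' hi'') (hadj j' i'' hi'' i' hi')
    · rw [h] at hi
      exact hadj j' i hi i' hi'

lemma block_bounds (t : ℕ → X) (cL C : ℝ) (hcL : 0 < cL) (hC : 0 < C)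
    (hLB : ∀ (m : ℕ) (b : ℕ → ℝ),
      (Finset.range (m+1)).sup' Finset.nonempty_range_add_one
          (fun k => |∑ i ∈ Finset.Icc k m, b i|)
        ≤ cL * ‖∑ i ∈ Finset.range (m+1), b i • t i‖)
    (hUB : ∀ (m : ℕ) (b : ℕ → ℝ),
      ‖∑ i ∈ Finset.range (m+1), b i • t i‖
        ≤ C * (Finset.range (m+1)).sup' Finset.nonempty_range_add_one
          (fun k => |∑ i ∈ Finset.Icc k m, b i|))
    (w : ℕ → X) (hw : IsConvexBlockSeq w t) (m : ℕ) (a : ℕ → ℝ) :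
    cL⁻¹ * ((Finset.range (m+1)).sup' Finset.nonempty_range_add_one
        (fun j => |∑ n ∈ Finset.Icc j m, a n|))
      ≤ ‖∑ n ∈ Finset.range (m+1), a n • w n‖ ∧
    ‖∑ n ∈ Finset.range (m+1), a n • w n‖
      ≤ C * ((Finset.range (m+1)).sup' Finset.nonempty_range_add_one
        (fun j => |∑ n ∈ Finset.Icc j m, a n|)) := by
  classical
  obtain ⟨F, lam, hFne, hadj, hlam0, hlam1, hwdef⟩ := hw
  have hord := blocks_ordered F hFne hadj
  set m' := (F m).max' (hFne m) with hm'
  have hFsub : ∀ n ≤ m, ∀ i ∈ F n, i ≤ m' := by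
    intro n hn i hi
    rcases lt_or_eq_of_le hn with h | h
    · exact le_of_lt (lt_of_lt_of_le (hord n m h i hi _ ((F m).max'_mem (hFne m)))
        (le_refl m'))
    · rw [h] at hi
      exact (F m).le_max' i hi
  set b : ℕ → ℝ := fun i => (∑ n ∈ (Finset.range (m+1)).filter (fun n => i ∈ F n), a n) * lam i
    with hb
  set A : ℕ → ℝ := fun j => ∑ n ∈ Finset.Icc j m, a n with hA
  set Asup := (Finset.range (m+1)).sup' Finset.nonempty_range_add_one (fun j => |A j|) with hAsup
  have hAsup0 : 0 ≤ Asup := tail_nonneg_sup m a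
  -- rewrite the sum
  have hswap : ∑ n ∈ Finset.range (m+1), a n • w n = ∑ i ∈ Finset.range (m'+1), b i • t i := by
    have h1 : ∀ n, a n • w n = ∑ i ∈ F n, (a n * lam i) • t i := by
      intro n
      rw [hwdef n, Finset.smul_sum]
      exact Finset.sum_congr rfl fun i _ => by rw [smul_smul]
    rw [Finset.sum_congr rfl fun n _ => h1 n]
    rw [Finset.sum_comm' (t' := Finset.range (m'+1))
      (s' := fun i => (Finset.range (m+1)).filter (fun n => i ∈ F n))]
    · refine Finset.sum_congr rfl fun i _ => ?_
      have hbi : b i = ∑ n ∈ (Finset.range (m+1)).filter (fun n => i ∈ F n), a n * lam i := by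
        simp only [hb]
        rw [Finset.sum_mul]
      rw [hbi, Finset.sum_smul]
    · intro n i
      simp only [Finset.mem_range, Finset.mem_filter]
      constructor
      · rintro ⟨h1', h2'⟩
        exact ⟨⟨h1', h2'⟩, Nat.lt_succ_of_le (hFsub n (Nat.lt_succ_iff.1 h1') i h2')⟩
      · rintro ⟨⟨h1', h2'⟩, _⟩
        exact ⟨h1', h2'⟩
  -- tail formula
  set c : ℕ → ℕ → ℝ := fun k n => ∑ i ∈ (F n).filter (fun i => k ≤ i), lam i with hc
  have htail : ∀ k, ∑ i ∈ Finset.Icc k m', b i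
      = ∑ n ∈ Finset.range (m+1), a n * c k n := by
    intro k
    have h1 : ∀ i, b i = ∑ n ∈ (Finset.range (m+1)).filter (fun n => i ∈ F n), a n * lam i := by
      intro i
      simp only [hb]
      rw [Finset.sum_mul]
    rw [Finset.sum_congr rfl fun i _ => h1 i]
    rw [Finset.sum_comm' (t' := Finset.range (m+1))
      (s' := fun n => (F n).filter (fun i => k ≤ i))]
    · refine Finset.sum_congr rfl fun n _ => ?_
      rw [hc, Finset.mul_sum]
    · intro i n
      simp only [Finset.mem_range, Finset.mem_filter, Finset.mem_Icc]
      constructor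
      · rintro ⟨⟨h1', h2'⟩, h3', h4'⟩
        exact ⟨⟨h4', h1'⟩, h3'⟩
      · rintro ⟨⟨h1', h2'⟩, h3'⟩
        exact ⟨⟨h2', hFsub n (Nat.lt_succ_iff.1 h3') i h1'⟩, h3', h1'⟩
  have hc0 : ∀ k n, 0 ≤ c k n := fun k n => Finset.sum_nonneg fun i _ => hlam0 i
  have hc1 : ∀ k n, c k n ≤ 1 := by
    intro k n
    simp only [hc]
    rw [← hlam1 n]
    exact Finset.sum_le_sum_of_subset_of_nonneg (Finset.filter_subset _ _)
      (fun i _ _ => hlam0 i)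
  have hcfull : ∀ k n, (∀ i ∈ F n, k ≤ i) → c k n = 1 := by
    intro k n h
    simp only [hc]
    rw [Finset.filter_true_of_mem h]
    exact hlam1 n
  have hczero : ∀ k n, (∀ i ∈ F n, i < k) → c k n = 0 := by
    intro k n h
    simp only [hc]
    rw [Finset.filter_false_of_mem fun i hi => not_le.2 (h i hi)]
    exact Finset.sum_empty
  have hcpos_full : ∀ k n n', n < n' → 0 < c k n → c k n' = 1 := by
    intro k n n' hnn' hpos
    have hex : ∃ i ∈ F n, k ≤ i := by
      by_contra hcon
      push_neg at hcon
      rw [hczero k n fun i hi => hcon i hi] at hpos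
      exact lt_irrefl _ hpos
    obtain ⟨i, hi, hki⟩ := hex
    exact hcfull k n' fun i' hi' => le_of_lt (lt_of_le_of_lt hki (hord n n' hnn' i hi i' hi'))
  have hAsplit : ∀ j ≤ m, A j = a j + A (j + 1) := by
    intro j hj
    simp only [hA]
    rw [← Finset.Ico_add_one_right_eq_Icc, ← Finset.Ico_add_one_right_eq_Icc]
    exact Finset.sum_eq_sum_Ico_succ_bot (Nat.lt_succ_of_le hj) _
  have hAbound : ∀ j, |A j| ≤ Asup := by
    intro j
    rcases le_or_gt j m with h | h
    · exact tail_abs_le_sup m a h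
    · simp only [hA]
      rw [Finset.Icc_eq_empty (by omega), Finset.sum_empty, abs_zero]
      exact hAsup0
  have hkey : ∀ k, |∑ n ∈ Finset.range (m+1), a n * c k n| ≤ Asup := by
    intro k
    by_cases hall : ∀ n ∈ Finset.range (m+1), c k n = 0
    · rw [Finset.sum_eq_zero fun n hn => by rw [hall n hn, mul_zero], abs_zero]
      exact hAsup0
    · push_neg at hall
      set P := (Finset.range (m+1)).filter (fun n => c k n ≠ 0) with hP
      have hPne : P.Nonempty := by
        obtain ⟨n, hn, hne'⟩ := hall
        exact ⟨n, by rw [hP, Finset.mem_filter]; exact ⟨hn, hne'⟩⟩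
      set n₀ := P.min' hPne with hn₀
      have hn₀P : n₀ ∈ P := P.min'_mem hPne
      have hn₀m : n₀ ≤ m := by
        have := hn₀P
        rw [hP, Finset.mem_filter, Finset.mem_range] at this
        omega
      have hn₀pos : 0 < c k n₀ := by
        have := hn₀P
        rw [hP, Finset.mem_filter] at this
        exact lt_of_le_of_ne (hc0 k n₀) (Ne.symm this.2)
      have hlow : ∀ n < n₀, c k n = 0 := by
        intro n hn
        by_contra hne'
        have : n ∈ P := by
          rw [hP, Finset.mem_filter, Finset.mem_range]
          exact ⟨by omega, hne'⟩
        exact absurd (P.min'_le n this) (by omega)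
      have hhigh : ∀ n, n₀ < n → c k n = 1 := fun n hn => hcpos_full k n₀ n hn hn₀pos
      have hsum : ∑ n ∈ Finset.range (m+1), a n * c k n
          = c k n₀ * A n₀ + (1 - c k n₀) * A (n₀ + 1) := by
        rw [Finset.range_eq_Ico,
          ← Finset.sum_Ico_consecutive _ (Nat.zero_le n₀) (by omega : n₀ ≤ m + 1)]
        have hz : ∑ n ∈ Finset.Ico 0 n₀, a n * c k n = 0 :=
          Finset.sum_eq_zero fun n hn => by
            rw [hlow n (Finset.mem_Ico.1 hn).2, mul_zero]
        rw [hz, zero_add, Finset.sum_eq_sum_Ico_succ_bot (by omega : n₀ < m + 1)]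
        have ho : ∑ n ∈ Finset.Ico (n₀+1) (m+1), a n * c k n
            = ∑ n ∈ Finset.Ico (n₀+1) (m+1), a n := by
          refine Finset.sum_congr rfl fun n hn => ?_
          rw [hhigh n (Finset.mem_Ico.1 hn).1, mul_one]
        have hA1 : ∑ n ∈ Finset.Ico (n₀+1) (m+1), a n = A (n₀ + 1) := by
          simp only [hA]; rw [Finset.Ico_add_one_right_eq_Icc]
        rw [ho, hA1, hAsplit n₀ hn₀m]
        ring
      rw [hsum]
      have h1 : |c k n₀ * A n₀ + (1 - c k n₀) * A (n₀ + 1)|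
          ≤ c k n₀ * |A n₀| + (1 - c k n₀) * |A (n₀ + 1)| := by
        refine le_trans (abs_add_le _ _) ?_
        rw [abs_mul, abs_mul, abs_of_nonneg (hc0 k n₀),
          abs_of_nonneg (show (0:ℝ) ≤ 1 - c k n₀ by linarith [hc1 k n₀])]
      refine le_trans h1 ?_
      calc c k n₀ * |A n₀| + (1 - c k n₀) * |A (n₀ + 1)|
          ≤ c k n₀ * Asup + (1 - c k n₀) * Asup := by
            have g1 := hAbound n₀
            have g2 := hAbound (n₀ + 1)
            have g3 := hc0 k n₀
            have g4 := hc1 k n₀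
            nlinarith
        _ = Asup := by ring
  have hboundary : ∀ j ≤ m, ∑ i ∈ Finset.Icc ((F j).min' (hFne j)) m', b i = A j := by
    intro j hj
    set k := (F j).min' (hFne j) with hk
    rw [htail k]
    have hlow : ∀ n < j, c k n = 0 := by
      intro n hn
      refine hczero k n fun i hi => ?_
      exact hord n j hn i hi k ((F j).min'_mem (hFne j))
    have hhigh : ∀ n, j ≤ n → c k n = 1 := by
      intro n hn
      rcases lt_or_eq_of_le hn with h | h
      · refine hcfull k n fun i hi => ?_
        exact le_of_lt (hord j n h k ((F j).min'_mem (hFne j)) i hi)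
      · rw [← h]
        exact hcfull k j fun i hi => (F j).min'_le i hi
    rw [Finset.range_eq_Ico,
      ← Finset.sum_Ico_consecutive _ (Nat.zero_le j) (by omega : j ≤ m + 1)]
    have hz : ∑ n ∈ Finset.Ico 0 j, a n * c k n = 0 :=
      Finset.sum_eq_zero fun n hn => by rw [hlow n (Finset.mem_Ico.1 hn).2, mul_zero]
    have ho : ∑ n ∈ Finset.Ico j (m+1), a n * c k n = ∑ n ∈ Finset.Ico j (m+1), a n := by
      refine Finset.sum_congr rfl fun n hn => ?_
      rw [hhigh n (Finset.mem_Ico.1 hn).1, mul_one]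
    rw [hz, zero_add, ho]
    simp only [hA]
    rw [Finset.Ico_add_one_right_eq_Icc]
  constructor
  · -- lower bound
    obtain ⟨j₀, hj₀, hj₀eq⟩ := Finset.exists_mem_eq_sup' (Finset.nonempty_range_add_one (n := m))
      (fun j => |∑ n ∈ Finset.Icc j m, a n|)
    have hj₀m : j₀ ≤ m := Finset.mem_range_succ_iff.1 hj₀
    have hkm' : (F j₀).min' (hFne j₀) ≤ m' :=
      hFsub j₀ hj₀m _ ((F j₀).min'_mem (hFne j₀))
    have h2 : Asup ≤ cL * ‖∑ n ∈ Finset.range (m+1), a n • w n‖ := by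
      have h3 : Asup = |∑ i ∈ Finset.Icc ((F j₀).min' (hFne j₀)) m', b i| := by
        rw [hboundary j₀ hj₀m]
        rw [hAsup, hj₀eq]
      rw [h3, hswap]
      exact le_trans (tail_abs_le_sup m' b hkm') (hLB m' b)
    rw [inv_mul_le_iff₀ hcL]
    exact h2
  · -- upper bound
    rw [hswap]
    refine le_trans (hUB m' b) ?_
    refine mul_le_mul_of_nonneg_left ?_ (le_of_lt hC)
    refine Finset.sup'_le _ _ fun k hk => ?_
    rw [htail k]
    exact hkey k


lemma basic_of_bounds (t : ℕ → X) (cL C : ℝ) (hcL : 0 < cL) (hC : 0 < C)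
    (hLB : ∀ (m : ℕ) (b : ℕ → ℝ),
      (Finset.range (m+1)).sup' Finset.nonempty_range_add_one
          (fun k => |∑ i ∈ Finset.Icc k m, b i|)
        ≤ cL * ‖∑ i ∈ Finset.range (m+1), b i • t i‖)
    (hUB : ∀ (m : ℕ) (b : ℕ → ℝ),
      ‖∑ i ∈ Finset.range (m+1), b i • t i‖
        ≤ C * (Finset.range (m+1)).sup' Finset.nonempty_range_add_one
          (fun k => |∑ i ∈ Finset.Icc k m, b i|)) :
    IsBasicSeq t (max (2 * C * cL) 1) := by
  classical
  refine ⟨?_, le_max_right _ _, ?_⟩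
  · intro n hn0
    set b : ℕ → ℝ := fun i => if i = n then 1 else 0 with hb
    have h1 := hLB n b
    have h2 : ∑ i ∈ Finset.range (n+1), b i • t i = t n := by
      rw [Finset.sum_eq_single n]
      · simp [hb]
      · intro i _ hne
        simp [hb, hne]
      · intro h
        exact absurd (Finset.self_mem_range_succ n) h
    have h3 : |∑ i ∈ Finset.Icc n n, b i| = 1 := by simp [hb]
    have h4 : (1:ℝ) ≤ (Finset.range (n+1)).sup' Finset.nonempty_range_add_one
        (fun k => |∑ i ∈ Finset.Icc k n, b i|) := by
      rw [← h3]
      exact tail_abs_le_sup n b (le_refl n)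
    rw [h2, hn0, norm_zero, mul_zero] at h1
    linarith
  · intro m n hmn a
    rcases Nat.eq_zero_or_pos m with rfl | hm
    · rw [Finset.range_zero, Finset.sum_empty, norm_zero]
      positivity
    have hn : 0 < n := lt_of_lt_of_le hm hmn
    obtain ⟨m₁, rfl⟩ : ∃ m₁, m = m₁ + 1 := ⟨m - 1, by omega⟩
    obtain ⟨n₁, rfl⟩ : ∃ n₁, n = n₁ + 1 := ⟨n - 1, by omega⟩
    have hm₁n₁ : m₁ ≤ n₁ := by omega
    have hdiff : ∀ k ≤ m₁, |∑ i ∈ Finset.Icc k m₁, a i|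
        ≤ 2 * (Finset.range (n₁+1)).sup' Finset.nonempty_range_add_one
          (fun k => |∑ i ∈ Finset.Icc k n₁, a i|) := by
      intro k hk
      have hsplit : ∑ i ∈ Finset.Icc k n₁, a i
          = ∑ i ∈ Finset.Icc k m₁, a i + ∑ i ∈ Finset.Icc (m₁+1) n₁, a i := by
        rw [← Finset.Ico_add_one_right_eq_Icc, ← Finset.Ico_add_one_right_eq_Icc, ← Finset.Ico_add_one_right_eq_Icc]
        exact (Finset.sum_Ico_consecutive _ (by omega) (by omega)).symm
      have h5 : |∑ i ∈ Finset.Icc (m₁+1) n₁, a i|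
          ≤ (Finset.range (n₁+1)).sup' Finset.nonempty_range_add_one
            (fun k => |∑ i ∈ Finset.Icc k n₁, a i|) := by
        rcases lt_or_eq_of_le hm₁n₁ with h | h
        · exact tail_abs_le_sup n₁ a h
        · rw [h, Finset.Icc_eq_empty (by omega), Finset.sum_empty, abs_zero]
          exact tail_nonneg_sup n₁ a
      have h6 : |∑ i ∈ Finset.Icc k n₁, a i|
          ≤ (Finset.range (n₁+1)).sup' Finset.nonempty_range_add_one
            (fun k => |∑ i ∈ Finset.Icc k n₁, a i|) :=
        tail_abs_le_sup n₁ a (by omega)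
      calc |∑ i ∈ Finset.Icc k m₁, a i|
          = |∑ i ∈ Finset.Icc k n₁, a i - ∑ i ∈ Finset.Icc (m₁+1) n₁, a i| := by
            rw [hsplit]; ring_nf
        _ ≤ |∑ i ∈ Finset.Icc k n₁, a i| + |∑ i ∈ Finset.Icc (m₁+1) n₁, a i| := abs_sub _ _
        _ ≤ 2 * _ := by linarith
    calc ‖∑ i ∈ Finset.range (m₁+1), a i • t i‖
        ≤ C * (Finset.range (m₁+1)).sup' Finset.nonempty_range_add_one
            (fun k => |∑ i ∈ Finset.Icc k m₁, a i|) := hUB m₁ a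
      _ ≤ C * (2 * (Finset.range (n₁+1)).sup' Finset.nonempty_range_add_one
            (fun k => |∑ i ∈ Finset.Icc k n₁, a i|)) := by
          refine mul_le_mul_of_nonneg_left ?_ (le_of_lt hC)
          refine Finset.sup'_le _ _ fun k hk => hdiff k (Finset.mem_range_succ_iff.1 hk)
      _ ≤ C * (2 * (cL * ‖∑ i ∈ Finset.range (n₁+1), a i • t i‖)) := by
          refine mul_le_mul_of_nonneg_left ?_ (le_of_lt hC)
          exact mul_le_mul_of_nonneg_left (hLB n₁ a) (by norm_num)
      _ = (2 * C * cL) * ‖∑ i ∈ Finset.range (n₁+1), a i • t i‖ := by ring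
      _ ≤ max (2 * C * cL) 1 * ‖∑ i ∈ Finset.range (n₁+1), a i • t i‖ :=
          mul_le_mul_of_nonneg_right (le_max_left _ _) (norm_nonneg _)

lemma unif_shift (t : ℕ → X) (cL C : ℝ) (hcL : 0 < cL) (hC : 0 < C)
    (hLB : ∀ (m : ℕ) (b : ℕ → ℝ),
      (Finset.range (m+1)).sup' Finset.nonempty_range_add_one
          (fun k => |∑ i ∈ Finset.Icc k m, b i|)
        ≤ cL * ‖∑ i ∈ Finset.range (m+1), b i • t i‖)
    (hUB : ∀ (m : ℕ) (b : ℕ → ℝ),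
      ‖∑ i ∈ Finset.range (m+1), b i • t i‖
        ≤ C * (Finset.range (m+1)).sup' Finset.nonempty_range_add_one
          (fun k => |∑ i ∈ Finset.Icc k m, b i|))
    (w : ℕ → X) (hw : IsConvexBlockSeq w t) : UnifShiftEquiv (cL * C) w := by
  have hLC : 0 < cL * C := mul_pos hcL hC
  intro p m a
  rcases Nat.eq_zero_or_pos m with rfl | hm
  · rw [Finset.range_zero, Finset.sum_empty, Finset.sum_empty, norm_zero]
    constructor
    · rw [mul_zero]
    · rw [mul_zero]
  obtain ⟨m₁, rfl⟩ : ∃ m₁, m = m₁ + 1 := ⟨m - 1, by omega⟩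
  obtain ⟨F, lam, hFne, hadj, hlam0, hlam1, hwdef⟩ := hw
  have hw0 : IsConvexBlockSeq w t := ⟨F, lam, hFne, hadj, hlam0, hlam1, hwdef⟩
  have hw' : IsConvexBlockSeq (fun n => w (n + p)) t := by
    refine ⟨fun j => F (j + p), lam, fun j => hFne _, ?_, hlam0, fun j => hlam1 _,
      fun j => hwdef _⟩
    intro j i hi i' hi'
    refine hadj (j + p) i hi i' ?_
    have hje : j + 1 + p = j + p + 1 := by omega
    simpa [hje] using hi'
  have h1 := block_bounds t cL C hcL hC hLB hUB w hw0 m₁ a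
  have h2 := block_bounds t cL C hcL hC hLB hUB _ hw' m₁ a
  set Asup := (Finset.range (m₁+1)).sup' Finset.nonempty_range_add_one
      (fun j => |∑ n ∈ Finset.Icc j m₁, a n|) with hAsup
  have hA1 : ∑ n ∈ Finset.range (m₁+1), a n • (fun n => w (n + p)) n
      = ∑ n ∈ Finset.range (m₁+1), a n • w (n + p) := rfl
  constructor
  · rw [one_div, inv_mul_le_iff₀ hLC]
    calc ‖∑ i ∈ Finset.range (m₁+1), a i • w (i + p)‖ ≤ C * Asup := h2.2
      _ = cL * C * (cL⁻¹ * Asup) := by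
          field_simp
      _ ≤ cL * C * ‖∑ i ∈ Finset.range (m₁+1), a i • w i‖ :=
          mul_le_mul_of_nonneg_left h1.1 (le_of_lt hLC)
  · calc ‖∑ i ∈ Finset.range (m₁+1), a i • w i‖ ≤ C * Asup := h1.2
      _ = cL * C * (cL⁻¹ * Asup) := by field_simp
      _ ≤ cL * C * ‖∑ i ∈ Finset.range (m₁+1), a i • w (i + p)‖ :=
          mul_le_mul_of_nonneg_left h2.1 (le_of_lt hLC)

end AuxSU

/-- Pełczyński's property (u) implies property (su). -/
theorem propertyU_implies_propertySU
    (X : Type*) [NormedAddCommGroup X] [NormedSpace ℝ X] [CompleteSpace X]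
    (hu : PropertyU X) : PropertySU X := by
  classical
  intro x hx hnx
  obtain ⟨y, hy, h0⟩ := hu x hx
  set s : ℕ → X := fun n => ∑ i ∈ Finset.range (n+1), y i with hs
  have h0' : ∀ f : StrongDual ℝ X, Tendsto (fun n => f (x n - s n)) atTop (𝓝 0) := by
    intro f
    have := h0 f
    rwa [map_zero] at this
  have hswc : WeakCauchySeq s := by
    intro f
    obtain ⟨l, hl⟩ := hx f
    refine ⟨l, ?_⟩
    have h2 : (fun n => f (s n)) = fun n => f (x n) - f (x n - s n) := by
      funext n
      rw [map_sub]
      ring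
    rw [h2]
    simpa using hl.sub (h0' f)
  have hnsw : ¬ ∃ w : X, ∀ f : StrongDual ℝ X,
      Tendsto (fun n => f (s n)) atTop (𝓝 (f w)) := by
    rintro ⟨w, hw⟩
    refine hnx ⟨w, fun f => ?_⟩
    have h2 : (fun n => f (x n)) = fun n => f (s n) + f (x n - s n) := by
      funext n
      rw [map_sub]
      ring
    rw [h2]
    simpa using (hw f).add (h0' f)
  obtain ⟨M, hM, hsep⟩ := exists_sep_functionals s hswc hnsw
  obtain ⟨ψ, g, hψ, hgM, hg0, hg1⟩ := extraction s M hsep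
  set t : ℕ → X := fun i => s (ψ i) with ht
  obtain ⟨Cw, hCw, hCwb⟩ := wuc_bound y hy
  have hLB : ∀ (m : ℕ) (b : ℕ → ℝ),
      (Finset.range (m+1)).sup' Finset.nonempty_range_add_one
          (fun k => |∑ i ∈ Finset.Icc k m, b i|)
        ≤ (2 * M) * ‖∑ i ∈ Finset.range (m+1), b i • t i‖ := by
    intro m b
    exact lb_estimate t g M hM hgM (fun k i hik => hg0 k i hik)
      (fun k i hki => hg1 k i hki) m b
  have hUB : ∀ (m : ℕ) (b : ℕ → ℝ),
      ‖∑ i ∈ Finset.range (m+1), b i • t i‖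
        ≤ Cw * (Finset.range (m+1)).sup' Finset.nonempty_range_add_one
          (fun k => |∑ i ∈ Finset.Icc k m, b i|) := by
    intro m b
    exact ub_estimate y Cw hCwb ψ hψ.monotone m b
  have hM2 : 0 < 2 * M := by positivity
  have hbasic := basic_of_bounds t (2 * M) Cw hM2 hCw hLB hUB
  have hshift : ∀ w : ℕ → X, IsConvexBlockSeq w (t ∘ id) →
      UnifShiftEquiv ((2 * M) * Cw) w := by
    intro w hw
    exact unif_shift t (2 * M) Cw hM2 hCw hLB hUB w (by simpa using hw)
  refine ⟨t, ⟨⟨_, hbasic⟩, (2 * M) * Cw, by positivity, id, strictMono_id, hshift⟩, ?_⟩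
  intro f
  rw [map_zero]
  obtain ⟨l, hl⟩ := hswc f
  have e2 : Tendsto (fun n => f (s (ψ n))) atTop (𝓝 l) := hl.comp hψ.tendsto_atTop
  have h2 : (fun n => f (x n - t n))
      = fun n => f (x n - s n) + (f (s n) - f (s (ψ n))) := by
    funext n
    rw [map_sub, map_sub]
    ring
  rw [h2]
  simpa using (h0' f).add (hl.sub e2)

end
end
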